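/- arXiv:1704.08053 — 6 statements merged into one kernel-verified Lean document; each statement's English description precedes it below -/
import Mathlib

section
/- Let (Ω, 𝓕, P) be a probability space, let X and Y be nonnegative random variables, and let F : [0,∞) → [0,∞) be a moderate function. Suppose β > 1 and δ, ε, γ, η > 0 are constants with γε < 1 such that F(βλ) ≤ γF(λ) and F(δ⁻¹λ) ≤ ηF(λ) for all λ > 0, and such that P[X > βλ and Y < δλ] ≤ ε · P[X > λ] for all λ > 0. Then E[F(X)] ≤ (γη/(1 − γε)) · E[F(Y)]. -/
open MeasureTheory Set Filter Topology

/-- A function `F : [0,∞) → [0,∞)` is *moderate* if it is continuous, nondecreasing,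
vanishes exactly at `0`, and satisfies a doubling condition `F(2x) ≤ c F(x)`. -/
def Moderate (F : ℝ → ℝ) : Prop :=
  ContinuousOn F (Set.Ici 0) ∧ MonotoneOn F (Set.Ici 0) ∧
  (∀ x ∈ Set.Ici (0 : ℝ), 0 ≤ F x) ∧ (∀ x ∈ Set.Ici (0 : ℝ), (F x = 0 ↔ x = 0)) ∧
  ∃ c > 0, ∀ x > (0 : ℝ), F (2 * x) ≤ c * F x

lemma exists_level (F : ℝ → ℝ) (hcont : ContinuousOn F (Set.Ici 0))
    (hmono : MonotoneOn F (Set.Ici 0)) (hF0 : F 0 = 0)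
    {t : ℝ} (ht : 0 < t) :
    (∀ x ≥ (0:ℝ), F x ≤ t) ∨ ∃ l > (0:ℝ), F l = t ∧ ∀ x ≥ (0:ℝ), (t < F x ↔ l < x) := by
  by_cases hall : ∀ x ≥ (0:ℝ), F x ≤ t
  · exact Or.inl hall
  push_neg at hall
  obtain ⟨x₀, hx₀, hx₀t⟩ := hall
  right
  set S : Set ℝ := {x | 0 ≤ x ∧ F x ≤ t} with hSdef
  have h0S : (0:ℝ) ∈ S := ⟨le_rfl, by rw [hF0]; exact ht.le⟩
  have hne : S.Nonempty := ⟨0, h0S⟩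
  have hbdd : BddAbove S := by
    refine ⟨x₀, fun x hx => ?_⟩
    by_contra h
    push_neg at h
    have := hmono hx₀ hx.1 h.le
    linarith [hx.2]
  set l := sSup S with hldef
  have hl0 : 0 ≤ l := le_csSup hbdd h0S
  have hmem_lt : ∀ x, 0 ≤ x → x < l → F x ≤ t := by
    intro x hx hxl
    obtain ⟨y, hyS, hxy⟩ := exists_lt_of_lt_csSup hne hxl
    exact (hmono hx hyS.1 hxy.le).trans hyS.2
  have hgt : ∀ x, l < x → t < F x := by
    intro x hxl
    by_contra h
    push_neg at h
    exact absurd (le_csSup hbdd ⟨hl0.trans hxl.le, h⟩) (not_le.mpr hxl)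
  have hlpos : 0 < l := by
    have h1 : ContinuousWithinAt F (Set.Ici 0) 0 := hcont 0 (by simp)
    have h2 : Tendsto F (𝓝[>] (0:ℝ)) (𝓝 (F 0)) := h1.mono Ioi_subset_Ici_self
    have h3 : ∀ᶠ x in 𝓝[>] (0:ℝ), F x < t :=
      h2.eventually_lt_const (by rw [hF0]; exact ht)
    obtain ⟨x, hx1, hx2⟩ := (h3.and self_mem_nhdsWithin).exists
    exact lt_of_lt_of_le hx2 (le_csSup hbdd ⟨le_of_lt hx2, hx1.le⟩)
  have hCA : ContinuousAt F l := (hcont l (by simp [hlpos.le])).continuousAt (Ici_mem_nhds hlpos)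
  have hle : F l ≤ t := by
    refine le_of_tendsto (hCA.tendsto.mono_left nhdsWithin_le_nhds : Tendsto F (𝓝[<] l) _) ?_
    filter_upwards [Ioo_mem_nhdsLT_of_mem ⟨hlpos, le_rfl⟩] with x hx
    exact hmem_lt x hx.1.le hx.2
  have hge : t ≤ F l := by
    refine ge_of_tendsto (hCA.tendsto.mono_left nhdsWithin_le_nhds : Tendsto F (𝓝[>] l) _) ?_
    filter_upwards [self_mem_nhdsWithin] with x hx
    exact (hgt x hx).le
  refine ⟨l, hlpos, le_antisymm hle hge, fun x hx => ⟨fun h => ?_, fun h => hgt x h⟩⟩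
  by_contra hc
  push_neg at hc
  have := hmono hx hlpos.le hc
  linarith

lemma good_lambda_bounded
    {Ω : Type*} [MeasurableSpace Ω] (P : Measure Ω) [IsProbabilityMeasure P]
    (X Y : Ω → ℝ) (hXm : Measurable X) (hYm : Measurable Y)
    (hX0 : ∀ ω, 0 ≤ X ω) (hY0 : ∀ ω, 0 ≤ Y ω)
    (F : ℝ → ℝ) (hcont : ContinuousOn F (Set.Ici 0))
    (hmono : MonotoneOn F (Set.Ici 0)) (hnn : ∀ x ∈ Set.Ici (0:ℝ), 0 ≤ F x)
    (hF0 : F 0 = 0)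
    (β δ ε γ η : ℝ) (hβ : 1 < β) (hδ : 0 < δ) (hε : 0 < ε) (hγ : 0 < γ) (hη : 0 < η)
    (hγε : γ * ε < 1)
    (hFβ : ∀ l > (0 : ℝ), F (β * l) ≤ γ * F l)
    (hFδ : ∀ l > (0 : ℝ), F (δ⁻¹ * l) ≤ η * F l)
    (hgood : ∀ l > (0 : ℝ),
      P {ω | β * l < X ω ∧ Y ω < δ * l} ≤ ENNReal.ofReal ε * P {ω | l < X ω})
    (hfin : ∫⁻ ω, ENNReal.ofReal (F (X ω)) ∂P ≠ ⊤) :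
    ∫⁻ ω, ENNReal.ofReal (F (X ω)) ∂P ≤
      ENNReal.ofReal (γ * η / (1 - γ * ε)) * ∫⁻ ω, ENNReal.ofReal (F (Y ω)) ∂P := by
  have hβ0 : (0:ℝ) < β := lt_trans one_pos hβ
  set G : ℝ → ℝ := fun x => F (max x 0) with hGdef
  have hGc : Continuous G :=
    hcont.comp_continuous (continuous_id.max continuous_const) (fun x => Set.mem_Ici.mpr (le_max_right _ _))
  have hGeq : ∀ x : ℝ, 0 ≤ x → G x = F x := fun x hx => by simp [hGdef, max_eq_left hx]
  -- abbreviations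
  set E1 := ∫⁻ ω, ENNReal.ofReal (F (X ω)) ∂P with hE1
  set E2 := ∫⁻ ω, ENNReal.ofReal (F (β⁻¹ * X ω)) ∂P with hE2
  set E3 := ∫⁻ ω, ENNReal.ofReal (F (δ⁻¹ * Y ω)) ∂P with hE3
  set E4 := ∫⁻ ω, ENNReal.ofReal (F (Y ω)) ∂P with hE4
  -- measurability
  have hmX : AEMeasurable (fun ω => F (X ω)) P := by
    have : (fun ω => F (X ω)) = fun ω => G (X ω) := by
      funext ω; rw [hGeq _ (hX0 ω)]
    rw [this]; exact (hGc.measurable.comp hXm).aemeasurable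
  have hmXβ : AEMeasurable (fun ω => F (β⁻¹ * X ω)) P := by
    have : (fun ω => F (β⁻¹ * X ω)) = fun ω => G (β⁻¹ * X ω) := by
      funext ω; rw [hGeq _ (mul_nonneg (inv_nonneg.mpr hβ0.le) (hX0 ω))]
    rw [this]; exact (hGc.measurable.comp (hXm.const_mul _)).aemeasurable
  have hmYδ : AEMeasurable (fun ω => F (δ⁻¹ * Y ω)) P := by
    have : (fun ω => F (δ⁻¹ * Y ω)) = fun ω => G (δ⁻¹ * Y ω) := by
      funext ω; rw [hGeq _ (mul_nonneg (inv_nonneg.mpr hδ.le) (hY0 ω))]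
    rw [this]; exact (hGc.measurable.comp (hYm.const_mul _)).aemeasurable
  -- layer cake representations
  have hlc1 : E1 = ∫⁻ t in Ioi (0:ℝ), P {ω | t < F (X ω)} :=
    lintegral_eq_lintegral_meas_lt P
      (Eventually.of_forall fun ω => hnn _ (hX0 ω)) hmX
  have hlc2 : E2 = ∫⁻ t in Ioi (0:ℝ), P {ω | t < F (β⁻¹ * X ω)} :=
    lintegral_eq_lintegral_meas_lt P
      (Eventually.of_forall fun ω => hnn _ (mul_nonneg (inv_nonneg.mpr hβ0.le) (hX0 ω))) hmXβ
  have hlc3 : E3 = ∫⁻ t in Ioi (0:ℝ), P {ω | t ≤ F (δ⁻¹ * Y ω)} :=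
    lintegral_eq_lintegral_meas_le P
      (Eventually.of_forall fun ω => hnn _ (mul_nonneg (inv_nonneg.mpr hδ.le) (hY0 ω))) hmYδ
  -- key pointwise-in-t inequality
  have hkey : ∀ t ∈ Ioi (0:ℝ),
      P {ω | t < F (β⁻¹ * X ω)} ≤
        ENNReal.ofReal ε * P {ω | t < F (X ω)} + P {ω | t ≤ F (δ⁻¹ * Y ω)} := by
    intro t ht
    rcases exists_level F hcont hmono hF0 ht with hall | ⟨l, hl, hFl, hchar⟩
    · have : {ω | t < F (β⁻¹ * X ω)} = (∅ : Set Ω) := by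
        ext ω
        simp only [mem_setOf_eq, mem_empty_iff_false, iff_false, not_lt]
        exact hall _ (mul_nonneg (inv_nonneg.mpr hβ0.le) (hX0 ω))
      rw [this, measure_empty]
      exact zero_le
    · have hA : {ω | t < F (β⁻¹ * X ω)} = {ω | β * l < X ω} := by
        ext ω
        rw [mem_setOf_eq, hchar _ (mul_nonneg (inv_nonneg.mpr hβ0.le) (hX0 ω)),
          inv_mul_eq_div, lt_div_iff₀ hβ0, mem_setOf_eq, mul_comm]
      have hB : {ω | t < F (X ω)} = {ω | l < X ω} := by
        ext ω
        rw [mem_setOf_eq, hchar _ (hX0 ω), mem_setOf_eq]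
      have hC : {ω | δ * l ≤ Y ω} ⊆ {ω | t ≤ F (δ⁻¹ * Y ω)} := by
        intro ω hω
        have h1 : l ≤ δ⁻¹ * Y ω := by
          rw [inv_mul_eq_div, le_div_iff₀ hδ, mul_comm]
          exact hω
        calc t = F l := hFl.symm
          _ ≤ F (δ⁻¹ * Y ω) := hmono (by simpa using hl.le)
              (by simpa using (hl.le.trans h1)) h1
      rw [hA, hB]
      calc P {ω | β * l < X ω}
          ≤ P ({ω | β * l < X ω ∧ Y ω < δ * l} ∪ {ω | δ * l ≤ Y ω}) := by
            refine measure_mono fun ω hω => ?_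
            by_cases hY : Y ω < δ * l
            · exact Or.inl ⟨hω, hY⟩
            · exact Or.inr (not_lt.mp hY)
        _ ≤ P {ω | β * l < X ω ∧ Y ω < δ * l} + P {ω | δ * l ≤ Y ω} := measure_union_le _ _
        _ ≤ ENNReal.ofReal ε * P {ω | l < X ω} + P {ω | t ≤ F (δ⁻¹ * Y ω)} :=
            add_le_add (hgood l hl) (measure_mono hC)
  -- step 1 : E1 ≤ γ E2
  have hstep1 : E1 ≤ ENNReal.ofReal γ * E2 := by
    rw [hE1, hE2, ← lintegral_const_mul' _ _ ENNReal.ofReal_ne_top]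
    refine lintegral_mono fun ω => ?_
    rw [← ENNReal.ofReal_mul hγ.le]
    refine ENNReal.ofReal_le_ofReal ?_
    rcases eq_or_lt_of_le (hX0 ω) with h | h
    · rw [← h]
      simp [hF0, mul_nonneg hγ.le (hnn 0 (by simp))]
    · have := hFβ (β⁻¹ * X ω) (mul_pos (inv_pos.mpr hβ0) h)
      rwa [← mul_assoc, mul_inv_cancel₀ hβ0.ne', one_mul] at this
  -- measurability of t ↦ P {t < F X}
  have hanti : Measurable fun t : ℝ => P {ω | t < F (X ω)} := by
    refine Antitone.measurable fun s u hsu => ?_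
    exact measure_mono fun ω hω => lt_of_le_of_lt hsu hω
  -- step 2 : E2 ≤ ε E1 + E3
  have hstep2 : E2 ≤ ENNReal.ofReal ε * E1 + E3 := by
    rw [hlc1, hlc2, hlc3, ← lintegral_const_mul _ hanti, ← lintegral_add_left (hanti.const_mul _)]
    refine lintegral_mono_ae ?_
    rw [ae_restrict_iff' measurableSet_Ioi]
    exact Eventually.of_forall hkey
  -- step 3 : E3 ≤ η E4
  have hstep3 : E3 ≤ ENNReal.ofReal η * E4 := by
    rw [hE3, hE4, ← lintegral_const_mul' _ _ ENNReal.ofReal_ne_top]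
    refine lintegral_mono fun ω => ?_
    rw [← ENNReal.ofReal_mul hη.le]
    refine ENNReal.ofReal_le_ofReal ?_
    rcases eq_or_lt_of_le (hY0 ω) with h | h
    · rw [← h]
      simp [hF0, mul_nonneg hη.le (hnn 0 (by simp))]
    · exact hFδ _ h
  -- combine
  have hmain : E1 ≤ ENNReal.ofReal γ * ENNReal.ofReal ε * E1
      + ENNReal.ofReal γ * ENNReal.ofReal η * E4 :=
    calc E1 ≤ ENNReal.ofReal γ * E2 := hstep1
      _ ≤ ENNReal.ofReal γ * (ENNReal.ofReal ε * E1 + ENNReal.ofReal η * E4) :=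
          mul_le_mul_right (hstep2.trans (add_le_add le_rfl hstep3)) _
      _ = _ := by rw [mul_add, ← mul_assoc, ← mul_assoc]
  -- final algebra
  have h1 : (0:ℝ) < 1 - γ * ε := by linarith
  by_cases hE4top : E4 = ⊤
  · rw [hE4top, ENNReal.mul_top (ENNReal.ofReal_pos.mpr (div_pos (by positivity) h1)).ne']
    exact le_top
  ·
    set a := E1.toReal with hadef
    set b := E4.toReal with hbdef
    have ha : E1 = ENNReal.ofReal a := (ENNReal.ofReal_toReal hfin).symm
    have hb : E4 = ENNReal.ofReal b := (ENNReal.ofReal_toReal hE4top).symm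
    have ha0 : 0 ≤ a := ENNReal.toReal_nonneg
    have hb0 : 0 ≤ b := ENNReal.toReal_nonneg
    have hmain' : ENNReal.ofReal a ≤ ENNReal.ofReal (γ * ε * a + γ * η * b) := by
      calc ENNReal.ofReal a = E1 := ha.symm
        _ ≤ ENNReal.ofReal γ * ENNReal.ofReal ε * E1
            + ENNReal.ofReal γ * ENNReal.ofReal η * E4 := hmain
        _ = ENNReal.ofReal (γ * ε * a + γ * η * b) := by
            rw [ha, hb, ENNReal.ofReal_add (by positivity) (by positivity),
              ENNReal.ofReal_mul (by positivity : (0:ℝ) ≤ γ * ε),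
              ENNReal.ofReal_mul (by positivity : (0:ℝ) ≤ γ * η),
              ENNReal.ofReal_mul hγ.le, ENNReal.ofReal_mul hγ.le]
    have hreal : a ≤ γ * ε * a + γ * η * b :=
      (ENNReal.ofReal_le_ofReal_iff (by positivity)).mp hmain'
    have hfinal : a ≤ γ * η / (1 - γ * ε) * b := by
      rw [div_mul_eq_mul_div, le_div_iff₀ h1]
      nlinarith
    calc E1 = ENNReal.ofReal a := ha
      _ ≤ ENNReal.ofReal (γ * η / (1 - γ * ε) * b) := ENNReal.ofReal_le_ofReal hfinal
      _ = ENNReal.ofReal (γ * η / (1 - γ * ε)) * ENNReal.ofReal b :=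
          ENNReal.ofReal_mul (by positivity)
      _ = ENNReal.ofReal (γ * η / (1 - γ * ε)) * E4 := by rw [← hb]

theorem good_lambda_inequality_aux
    {Ω : Type*} [MeasurableSpace Ω] (P : Measure Ω) [IsProbabilityMeasure P]
    (X Y : Ω → ℝ) (hXm : Measurable X) (hYm : Measurable Y)
    (hX0 : ∀ ω, 0 ≤ X ω) (hY0 : ∀ ω, 0 ≤ Y ω)
    (F : ℝ → ℝ)
    (hcont : ContinuousOn F (Set.Ici 0)) (hmono : MonotoneOn F (Set.Ici 0))
    (hnn : ∀ x ∈ Set.Ici (0:ℝ), 0 ≤ F x) (hF0 : F 0 = 0)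
    (β δ ε γ η : ℝ) (hβ : 1 < β) (hδ : 0 < δ) (hε : 0 < ε) (hγ : 0 < γ) (hη : 0 < η)
    (hγε : γ * ε < 1)
    (hFβ : ∀ l > (0 : ℝ), F (β * l) ≤ γ * F l)
    (hFδ : ∀ l > (0 : ℝ), F (δ⁻¹ * l) ≤ η * F l)
    (hgood : ∀ l > (0 : ℝ),
      P {ω | β * l < X ω ∧ Y ω < δ * l} ≤ ENNReal.ofReal ε * P {ω | l < X ω}) :
    ∫⁻ ω, ENNReal.ofReal (F (X ω)) ∂P ≤
      ENNReal.ofReal (γ * η / (1 - γ * ε)) * ∫⁻ ω, ENNReal.ofReal (F (Y ω)) ∂P := by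
  have hβ0 : (0:ℝ) < β := lt_trans one_pos hβ
  set G : ℝ → ℝ := fun x => F (max x 0) with hGdef
  have hGc : Continuous G :=
    hcont.comp_continuous (continuous_id.max continuous_const) (fun x => Set.mem_Ici.mpr (le_max_right _ _))
  have hGeq : ∀ x : ℝ, 0 ≤ x → G x = F x := fun x hx => by simp [hGdef, max_eq_left hx]
  set Xn : ℕ → Ω → ℝ := fun n ω => min (X ω) n with hXndef
  have hXn0 : ∀ n ω, 0 ≤ Xn n ω := fun n ω => le_min (hX0 ω) (n.cast_nonneg)
  have hXnm : ∀ n, Measurable (Xn n) := fun n => hXm.min measurable_const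
  have hgoodn : ∀ n : ℕ, ∀ l > (0:ℝ),
      P {ω | β * l < Xn n ω ∧ Y ω < δ * l} ≤ ENNReal.ofReal ε * P {ω | l < Xn n ω} := by
    intro n l hl
    by_cases hn : β * l < (n:ℝ)
    · have hln : l < (n:ℝ) := lt_trans ((lt_mul_iff_one_lt_left hl).mpr hβ) hn
      have e1 : {ω | β * l < Xn n ω ∧ Y ω < δ * l} = {ω | β * l < X ω ∧ Y ω < δ * l} := by
        ext ω; simp [hXndef, lt_min_iff, hn]
      have e2 : {ω | l < Xn n ω} = {ω | l < X ω} := by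
        ext ω; simp [hXndef, lt_min_iff, hln]
      rw [e1, e2]; exact hgood l hl
    · have he : {ω | β * l < Xn n ω ∧ Y ω < δ * l} = (∅ : Set Ω) := by
        ext ω
        simp only [hXndef, Set.mem_setOf_eq, Set.mem_empty_iff_false, iff_false, not_and,
          lt_min_iff]
        intro h
        exact absurd h.2 hn
      rw [he, measure_empty]; exact zero_le
  have hbnd : ∀ n : ℕ, ∫⁻ ω, ENNReal.ofReal (F (Xn n ω)) ∂P ≠ ⊤ := by
    intro n
    have hle : ∀ ω, ENNReal.ofReal (F (Xn n ω)) ≤ ENNReal.ofReal (F n) := fun ω =>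
      ENNReal.ofReal_le_ofReal (hmono (hXn0 n ω) (Set.mem_Ici.mpr (n.cast_nonneg)) (min_le_right _ _))
    refine ne_top_of_le_ne_top ?_ (lintegral_mono hle)
    rw [lintegral_const]
    exact ENNReal.mul_ne_top ENNReal.ofReal_ne_top (measure_ne_top _ _)
  have hcore : ∀ n : ℕ, ∫⁻ ω, ENNReal.ofReal (F (Xn n ω)) ∂P ≤
      ENNReal.ofReal (γ * η / (1 - γ * ε)) * ∫⁻ ω, ENNReal.ofReal (F (Y ω)) ∂P := fun n =>
    good_lambda_bounded P (Xn n) Y (hXnm n) hYm (hXn0 n) hY0 F hcont hmono hnn hF0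
      β δ ε γ η hβ hδ hε hγ hη hγε hFβ hFδ (hgoodn n) (hbnd n)
  have hmonoseq : Monotone fun n : ℕ => fun ω => ENNReal.ofReal (F (Xn n ω)) := by
    intro m n hmn ω
    exact ENNReal.ofReal_le_ofReal (hmono (hXn0 m ω) (hXn0 n ω)
      (min_le_min le_rfl (Nat.cast_le.mpr hmn)))
  have hmeasseq : ∀ n : ℕ, Measurable fun ω => ENNReal.ofReal (F (Xn n ω)) := by
    intro n
    have he : (fun ω => F (Xn n ω)) = fun ω => G (Xn n ω) :=
      funext fun ω => (hGeq _ (hXn0 n ω)).symm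
    exact ENNReal.measurable_ofReal.comp (he ▸ hGc.measurable.comp (hXnm n))
  have hsup : ∀ ω, (⨆ n : ℕ, ENNReal.ofReal (F (Xn n ω))) = ENNReal.ofReal (F (X ω)) := by
    intro ω
    obtain ⟨n₀, hn₀⟩ := exists_nat_ge (X ω)
    apply le_antisymm
    · exact iSup_le fun n =>
        ENNReal.ofReal_le_ofReal (hmono (hXn0 n ω) (hX0 ω) (min_le_left _ _))
    · have hmin : Xn n₀ ω = X ω := min_eq_left hn₀
      calc ENNReal.ofReal (F (X ω)) = ENNReal.ofReal (F (Xn n₀ ω)) := by rw [hmin]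
        _ ≤ ⨆ n : ℕ, ENNReal.ofReal (F (Xn n ω)) := le_iSup (fun n : ℕ => ENNReal.ofReal (F (Xn n ω))) n₀
  calc ∫⁻ ω, ENNReal.ofReal (F (X ω)) ∂P
      = ∫⁻ ω, ⨆ n : ℕ, ENNReal.ofReal (F (Xn n ω)) ∂P :=
        lintegral_congr fun ω => (hsup ω).symm
    _ = ⨆ n : ℕ, ∫⁻ ω, ENNReal.ofReal (F (Xn n ω)) ∂P := lintegral_iSup hmeasseq hmonoseq
    _ ≤ _ := iSup_le hcore

/-- Burkholder's good-λ inequality (Lemma 4.6 of the paper): if `X, Y ≥ 0`,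
`F` is moderate, `β > 1`, `δ, ε, γ, η > 0` with `γε < 1`, `F(βλ) ≤ γ F(λ)`,
`F(δ⁻¹λ) ≤ η F(λ)`, and `P[X > βλ, Y < δλ] ≤ ε P[X > λ]` for all `λ > 0`,
then `E[F(X)] ≤ (γη/(1−γε)) E[F(Y)]`. -/
theorem good_lambda_inequality
    {Ω : Type*} [MeasurableSpace Ω] (P : Measure Ω) [IsProbabilityMeasure P]
    (X Y : Ω → ℝ) (hXm : Measurable X) (hYm : Measurable Y)
    (hX0 : ∀ ω, 0 ≤ X ω) (hY0 : ∀ ω, 0 ≤ Y ω)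
    (F : ℝ → ℝ) (hF : Moderate F)
    (β δ ε γ η : ℝ) (hβ : 1 < β) (hδ : 0 < δ) (hε : 0 < ε) (hγ : 0 < γ) (hη : 0 < η)
    (hγε : γ * ε < 1)
    (hFβ : ∀ l > (0 : ℝ), F (β * l) ≤ γ * F l)
    (hFδ : ∀ l > (0 : ℝ), F (δ⁻¹ * l) ≤ η * F l)
    (hgood : ∀ l > (0 : ℝ),
      P {ω | β * l < X ω ∧ Y ω < δ * l} ≤ ENNReal.ofReal ε * P {ω | l < X ω}) :
    ∫⁻ ω, ENNReal.ofReal (F (X ω)) ∂P ≤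
      ENNReal.ofReal (γ * η / (1 - γ * ε)) * ∫⁻ ω, ENNReal.ofReal (F (Y ω)) ∂P := by
  obtain ⟨hcont, hmono, hnn, hzero, -⟩ := hF
  exact good_lambda_inequality_aux P X Y hXm hYm hX0 hY0 F hcont hmono hnn
    ((hzero 0 (by simp)).mpr rfl) β δ ε γ η hβ hδ hε hγ hη hγε hFβ hFδ hgood
end

section
/- Let (E,d) be a metric space, p ≥ 1, and set R = 1 + 2^p + 3^{p−1}. Let T, S > 0, let τ : [0,T] → [0,S] be nondecreasing and right-continuous with τ(0) = 0 and τ(T) = S, let y : [0,S] → E be continuous, and define x := y ∘ τ : [0,T] → E. Call t ∈ (0,T] a jump time of τ if τ(t−) < τ(t), and for such t let γ_t denote the restriction of y to the interval [τ(t−), τ(t)]. Then max( ‖x‖_{p-var;[0,T]}^p , Σ_t ‖γ_t‖_{p-var;[τ(t−),τ(t)]}^p ) ≤ ‖y‖_{p-var;[0,S]}^p ≤ R·‖x‖_{p-var;[0,T]}^p + (R + 3^{p−1})·Σ_t ‖γ_t‖_{p-var;[τ(t−),τ(t)]}^p, where the sums range over the (at most countably many) jump times t of τ. -/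
open scoped ENNReal

noncomputable def pVar {E : Type*} [PseudoMetricSpace E] (p : ℝ) (x : ℝ → E) (a b : ℝ) : ℝ≥0∞ :=
  ⨆ (n : ℕ) (t : Fin (n + 1) → ℝ) (_ : Monotone t) (_ : t 0 = a) (_ : t (Fin.last n) = b),
    ∑ i : Fin n, edist (x (t i.castSucc)) (x (t i.succ)) ^ p

section Aux
variable {E : Type*} [PseudoMetricSpace E]

noncomputable def psum (p : ℝ) (x : ℝ → E) (t : ℕ → ℝ) (n : ℕ) : ℝ≥0∞ :=
  ∑ i ∈ Finset.range n, edist (x (t i)) (x (t (i+1))) ^ p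

/-- Partitions of `[a,b]` as a subtype. -/
def PartI (a b : ℝ) : Type :=
  {q : ℕ × (ℕ → ℝ) // Monotone q.2 ∧ q.2 0 = a ∧ q.2 q.1 = b}

lemma partI_nonempty {a b : ℝ} (hab : a ≤ b) : Nonempty (PartI a b) := by
  refine ⟨⟨(1, fun i => if i = 0 then a else b), ?_, by simp, by simp⟩⟩
  refine monotone_nat_of_le_succ fun i => ?_
  rcases Nat.eq_zero_or_pos i with h | h
  · simpa [h] using hab
  · simp [Nat.pos_iff_ne_zero.mp h]

lemma pVar_eq (p : ℝ) (x : ℝ → E) (a b : ℝ) :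
    pVar p x a b = ⨆ q : PartI a b, psum p x q.1.2 q.1.1 := by
  apply le_antisymm
  · refine iSup_le fun n => iSup_le fun t => iSup_le fun hmono => iSup_le fun h0 =>
      iSup_le fun hl => ?_
    set t' : ℕ → ℝ := fun i => t ⟨min i n, by omega⟩ with ht'
    have hmono' : Monotone t' := fun i j hij => hmono (by simp only [Fin.mk_le_mk]; omega)
    have h0' : t' 0 = a := by
      have : (⟨min 0 n, by omega⟩ : Fin (n+1)) = 0 := by simp [Fin.ext_iff]
      simp only [ht', this, h0]
    have hl' : t' n = b := by
      have : (⟨min n n, by omega⟩ : Fin (n+1)) = Fin.last n := by simp [Fin.ext_iff, Fin.last]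
      simp only [ht', this, hl]
    have hsum : (∑ i : Fin n, edist (x (t i.castSucc)) (x (t i.succ)) ^ p)
        = psum p x t' n := by
      rw [psum, ← Fin.sum_univ_eq_sum_range]
      refine Finset.sum_congr rfl fun i _ => ?_
      have h1 : t i.castSucc = t' i.val := by
        simp only [ht']; congr 1; simp [Fin.ext_iff]
      have h2 : t i.succ = t' (i.val + 1) := by
        simp only [ht']; congr 1; simp [Fin.ext_iff]; try omega
      rw [h1, h2]
    rw [hsum]
    exact le_iSup_of_le ⟨(n, t'), hmono', h0', hl'⟩ le_rfl
  · refine iSup_le fun q => ?_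
    obtain ⟨⟨n, t⟩, hmono, h0, hl⟩ := q
    dsimp only at hmono h0 hl ⊢
    set tf : Fin (n+1) → ℝ := fun i => t i.val with htf
    have hm' : Monotone tf := fun i j hij => hmono hij
    have h0' : tf 0 = a := by simpa [htf] using h0
    have hl' : tf (Fin.last n) = b := by simpa [htf, Fin.last] using hl
    have hsum : psum p x t n = ∑ i : Fin n, edist (x (tf i.castSucc)) (x (tf i.succ)) ^ p := by
      rw [psum, ← Fin.sum_univ_eq_sum_range]
      simp [htf]
    rw [hsum]
    exact le_iSup_of_le n (le_iSup_of_le tf (le_iSup_of_le hm'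
      (le_iSup_of_le h0' (le_iSup_of_le hl' le_rfl))))

lemma sum_range_add' {M : Type*} [AddCommMonoid M] (f : ℕ → M) (n m : ℕ) :
    ∑ i ∈ Finset.range (n + m), f i
      = (∑ i ∈ Finset.range n, f i) + ∑ i ∈ Finset.range m, f (n + i) := by
  induction m with
  | zero => simp
  | succ m ih => rw [← Nat.add_assoc, Finset.sum_range_succ, ih, Finset.sum_range_succ,
      add_assoc]

/-- Any monotone sequence of points inside `[a,b]` has partition sum `≤ pVar`. -/
lemma psum_le_pVar {p : ℝ} {x : ℝ → E} {t : ℕ → ℝ} {n : ℕ} {a b : ℝ}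
    (hmono : Monotone t) (h0 : a ≤ t 0) (hn : t n ≤ b) :
    psum p x t n ≤ pVar p x a b := by
  classical
  set w : ℕ → ℝ := fun i => if i = 0 then a else if i ≤ n + 1 then t (i - 1) else b with hw
  have hwmono : Monotone w := by
    refine monotone_nat_of_le_succ fun i => ?_
    rcases Nat.eq_zero_or_pos i with rfl | hi
    · have e0 : w 0 = a := by simp [hw]
      have e1 : w 1 = t 0 := by
        simp only [hw]; rw [if_neg one_ne_zero, if_pos (by omega)]
      rw [e0, e1]; exact h0
    · have hine : i ≠ 0 := by omega
      simp only [hw, if_neg hine, if_neg (by omega : ¬ i + 1 = 0)]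
      split_ifs with h1 h2 h3 <;> try omega
      · exact hmono (by omega)
      · exact le_trans (hmono (by omega : i - 1 ≤ n)) hn
      · exact le_rfl
  have hw0 : w 0 = a := by simp [hw]
  have hwl : w (n + 2) = b := by simp [hw]
  have key : psum p x t n ≤ psum p x w (n + 2) := by
    have : psum p x w (n + 2)
        = (∑ i ∈ Finset.range (n + 1),
            edist (x (w (i+1))) (x (w (i+1+1))) ^ p)
          + edist (x (w 0)) (x (w 1)) ^ p := by
      rw [psum, Finset.sum_range_succ']
    rw [this, Finset.sum_range_succ]
    have hmid : ∑ i ∈ Finset.range n, edist (x (w (i+1))) (x (w (i+1+1))) ^ p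
        = psum p x t n := by
      refine Finset.sum_congr rfl fun i hi => ?_
      have hi' := Finset.mem_range.mp hi
      have e1 : w (i + 1) = t i := by simp only [hw]; rw [if_neg (by omega), if_pos (by omega)]; congr 1
      have e2 : w (i + 1 + 1) = t (i + 1) := by
        simp only [hw]; rw [if_neg (by omega), if_pos (by omega)]; congr 1
      rw [e1, e2]
    rw [hmid]
    exact le_add_of_le_of_nonneg (le_add_of_le_of_nonneg le_rfl zero_le) zero_le
  refine key.trans ?_
  rw [pVar_eq]
  exact le_iSup_of_le ⟨(n + 2, w), hwmono, hw0, hwl⟩ le_rfl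

lemma subset_sum_le_pVar {p : ℝ} {x : ℝ → E} {t : ℕ → ℝ} {n : ℕ} {a b : ℝ}
    (hmono : Monotone t) (h0 : a ≤ t 0) (hn : t n ≤ b) {F : Finset ℕ}
    (hF : F ⊆ Finset.range n) :
    ∑ i ∈ F, edist (x (t i)) (x (t (i+1))) ^ p ≤ pVar p x a b :=
  le_trans (Finset.sum_le_sum_of_subset hF) (psum_le_pVar hmono h0 hn)

lemma pVar_add_pVar_le {p : ℝ} {x : ℝ → E} {a b c : ℝ} (hab : a ≤ b) (hbc : b ≤ c) :
    pVar p x a b + pVar p x b c ≤ pVar p x a c := by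
  classical
  have h1 := partI_nonempty (a := a) (b := b) hab
  have h2 := partI_nonempty (a := b) (b := c) hbc
  rw [pVar_eq p x a b, pVar_eq p x b c]
  rw [ENNReal.iSup_add]
  refine iSup_le fun q => ?_
  rw [ENNReal.add_iSup]
  refine iSup_le fun r => ?_
  obtain ⟨⟨n, s⟩, hsm, hs0, hsl⟩ := q
  obtain ⟨⟨m, u⟩, hum, hu0, hul⟩ := r
  dsimp only at hsm hs0 hsl hum hu0 hul ⊢
  set w : ℕ → ℝ := fun i => if i ≤ n then s i else u (i - n) with hwdef
  have hwn : ∀ i, w (n + i) = u i := by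
    intro i
    rcases Nat.eq_zero_or_pos i with rfl | hi
    · simp only [hwdef, if_pos (by omega : n + 0 ≤ n)]
      exact hsl.trans hu0.symm
    · simp only [hwdef, if_neg (by omega : ¬ n + i ≤ n)]
      congr 1; omega
  have hwmono : Monotone w := by
    refine monotone_nat_of_le_succ fun i => ?_
    simp only [hwdef]
    split_ifs with h1' h2' <;> try omega
    · exact hsm (by omega)
    · have : i = n := by omega
      subst this
      rw [Nat.add_sub_cancel_left, hsl, ← hu0]
      exact hum (by omega)
    · exact hum (by omega)
  have hw0 : w 0 = a := by
    simp only [hwdef, if_pos (Nat.zero_le n)]; exact hs0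
  have hwl : w (n + m) = c := (hwn m).trans hul
  have hsplit : psum p x w (n + m) = psum p x s n + psum p x u m := by
    rw [psum, sum_range_add']
    congr 1
    · refine Finset.sum_congr rfl fun i hi => ?_
      have hi' := Finset.mem_range.mp hi
      have e1 : w i = s i := by simp only [hwdef]; rw [if_pos (by omega)]
      have e2 : w (i + 1) = s (i + 1) := by simp only [hwdef]; rw [if_pos (by omega)]
      rw [e1, e2]
    · refine Finset.sum_congr rfl fun i hi => ?_
      rw [show n + i + 1 = n + (i + 1) by omega, hwn, hwn]
  calc psum p x s n + psum p x u m = psum p x w (n + m) := hsplit.symm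
    _ ≤ pVar p x a c := by
        rw [pVar_eq]
        exact le_iSup_of_le ⟨(n + m, w), hwmono, hw0, hwl⟩ le_rfl

lemma pVar_le_pVar_left {p : ℝ} {x : ℝ → E} {a b c : ℝ} (hab : a ≤ b) (hbc : b ≤ c) :
    pVar p x a b ≤ pVar p x a c :=
  le_trans le_self_add (pVar_add_pVar_le hab hbc)

lemma pVar_le_pVar_right {p : ℝ} {x : ℝ → E} {a b c : ℝ} (hab : a ≤ b) (hbc : b ≤ c) :
    pVar p x b c ≤ pVar p x a c :=
  le_trans le_add_self (pVar_add_pVar_le hab hbc)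

end Aux

lemma add3_rpow_le {p : ℝ} (hp : 1 ≤ p) (d₁ d₂ d₃ : ℝ≥0∞) :
    (d₁ + d₂ + d₃) ^ p ≤ (3 : ℝ≥0∞) ^ (p - 1) * (d₁ ^ p + d₂ ^ p + d₃ ^ p) := by
  have h3 : (3 : ℝ≥0∞) ≠ 0 := by norm_num
  have h3' : (3 : ℝ≥0∞) ≠ ⊤ := by norm_num
  set d : Fin 3 → ℝ≥0∞ := ![d₁, d₂, d₃] with hd
  have hw : ∑ _i : Fin 3, (3 : ℝ≥0∞)⁻¹ = 1 := by
    rw [Finset.sum_const]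
    simp only [Finset.card_univ, Fintype.card_fin, nsmul_eq_mul]
    rw [show ((3:ℕ):ℝ≥0∞) = (3:ℝ≥0∞) by norm_num, ENNReal.mul_inv_cancel h3 h3']
  have key := ENNReal.rpow_arith_mean_le_arith_mean_rpow Finset.univ
    (fun _ : Fin 3 => (3:ℝ≥0∞)⁻¹) d hw hp
  have hsum : ∑ i : Fin 3, (3:ℝ≥0∞)⁻¹ * d i = 3⁻¹ * (d₁ + d₂ + d₃) := by
    rw [← Finset.mul_sum]
    congr 1
    simp [hd, Fin.sum_univ_three, add_assoc]
  have hsum2 : ∑ i : Fin 3, (3:ℝ≥0∞)⁻¹ * d i ^ p = 3⁻¹ * (d₁ ^ p + d₂ ^ p + d₃ ^ p) := by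
    rw [← Finset.mul_sum]
    congr 1
    simp [hd, Fin.sum_univ_three, add_assoc]
  rw [hsum, hsum2] at key
  have hp0 : (0:ℝ) ≤ p := le_trans zero_le_one hp
  calc (d₁ + d₂ + d₃) ^ p = (3 * (3⁻¹ * (d₁ + d₂ + d₃))) ^ p := by
        rw [← mul_assoc, ENNReal.mul_inv_cancel h3 h3', one_mul]
    _ = 3 ^ p * (3⁻¹ * (d₁ + d₂ + d₃)) ^ p := ENNReal.mul_rpow_of_nonneg _ _ hp0
    _ ≤ 3 ^ p * (3⁻¹ * (d₁ ^ p + d₂ ^ p + d₃ ^ p)) := by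
        exact mul_le_mul_right key _
    _ = (3 ^ p * 3⁻¹) * (d₁ ^ p + d₂ ^ p + d₃ ^ p) := by rw [mul_assoc]
    _ = (3 : ℝ≥0∞) ^ (p - 1) * (d₁ ^ p + d₂ ^ p + d₃ ^ p) := by
        congr 1
        rw [show p - 1 = p + (-1) by ring, ENNReal.rpow_add _ _ h3 h3', ENNReal.rpow_neg_one]

set_option maxHeartbeats 1000000 in
/-- Lemma 2.14 of the paper (intrinsic form, both bounds).  Let `τ : [0,T] → [0,S]` be
nondecreasing, right-continuous, with `τ 0 = 0`, `τ T = S`, let `y : [0,S] → E` be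
continuous, and `x := y ∘ τ`.  Writing `τ(t−) = sSup (τ '' [0,t))` and letting the sums
range over the jump times of `τ`, with `R = 1 + 2^p + 3^(p-1)`:
`max(‖x‖ₚ^p, Σ_t ‖γ_t‖ₚ^p) ≤ ‖y‖ₚ^p ≤ R ‖x‖ₚ^p + (R + 3^(p-1)) Σ_t ‖γ_t‖ₚ^p`. -/
theorem pvar_jump_decomposition
    {E : Type*} [MetricSpace E] (p T S : ℝ) (hp : 1 ≤ p) (hT : 0 < T) (hS : 0 < S)
    (τ : ℝ → ℝ) (y : ℝ → E)
    (hτmono : MonotoneOn τ (Set.Icc 0 T))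
    (hτrc : ∀ t ∈ Set.Ico 0 T, Filter.Tendsto τ (nhdsWithin t (Set.Ioi t)) (nhds (τ t)))
    (hτ0 : τ 0 = 0) (hτT : τ T = S)
    (hy : ContinuousOn y (Set.Icc 0 S)) :
    max (pVar p (y ∘ τ) 0 T)
        (∑' t : {t : ℝ | t ∈ Set.Ioc 0 T ∧ sSup (τ '' Set.Ico 0 t) < τ t},
          pVar p y (sSup (τ '' Set.Ico 0 (t : ℝ))) (τ (t : ℝ)))
      ≤ pVar p y 0 S
    ∧ pVar p y 0 S
      ≤ ENNReal.ofReal (1 + (2 : ℝ) ^ p + (3 : ℝ) ^ (p - 1)) * pVar p (y ∘ τ) 0 T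
        + ENNReal.ofReal ((1 + (2 : ℝ) ^ p + (3 : ℝ) ^ (p - 1)) + (3 : ℝ) ^ (p - 1)) *
          ∑' t : {t : ℝ | t ∈ Set.Ioc 0 T ∧ sSup (τ '' Set.Ico 0 t) < τ t},
            pVar p y (sSup (τ '' Set.Ico 0 (t : ℝ))) (τ (t : ℝ)) := by
  classical
  set lm : ℝ → ℝ := fun t => sSup (τ '' Set.Ico 0 t) with hlm
  -- basic facts about τ
  have hτmem : ∀ t ∈ Set.Icc (0:ℝ) T, 0 ≤ τ t ∧ τ t ≤ S := by
    intro t ht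
    constructor
    · rw [← hτ0]; exact hτmono ⟨le_rfl, hT.le⟩ ht ht.1
    · rw [← hτT]; exact hτmono ht ⟨hT.le, le_rfl⟩ ht.2
  have hlm_bdd : ∀ t ∈ Set.Ioc (0:ℝ) T, ∀ v ∈ τ '' Set.Ico 0 t, v ≤ τ t := by
    rintro t ht v ⟨u, hu, rfl⟩
    exact hτmono ⟨hu.1, le_trans hu.2.le ht.2⟩ ⟨ht.1.le, ht.2⟩ hu.2.le
  have hlm_le : ∀ t ∈ Set.Ioc (0:ℝ) T, lm t ≤ τ t := by
    intro t ht
    refine csSup_le ⟨τ 0, 0, ⟨le_rfl, ht.1⟩, rfl⟩ (hlm_bdd t ht)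
  have hlm_nonneg : ∀ t ∈ Set.Ioc (0:ℝ) T, 0 ≤ lm t := by
    intro t ht
    rw [← hτ0]
    exact le_csSup ⟨τ t, hlm_bdd t ht⟩ ⟨0, ⟨le_rfl, ht.1⟩, rfl⟩
  have hτle_lm : ∀ t₁ ∈ Set.Icc (0:ℝ) T, ∀ t₂ ∈ Set.Ioc (0:ℝ) T, t₁ < t₂ → τ t₁ ≤ lm t₂ := by
    intro t₁ ht₁ t₂ ht₂ h12
    exact le_csSup ⟨τ t₂, hlm_bdd t₂ ht₂⟩ ⟨t₁, ⟨ht₁.1, h12⟩, rfl⟩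
  set J : Set ℝ := {t : ℝ | t ∈ Set.Ioc 0 T ∧ sSup (τ '' Set.Ico 0 t) < τ t} with hJ
  -- lower bound, first part
  have low1 : pVar p (y ∘ τ) 0 T ≤ pVar p y 0 S := by
    rw [pVar_eq p (y ∘ τ) 0 T]
    refine iSup_le fun q => ?_
    obtain ⟨⟨n, t⟩, hm, h0, hl⟩ := q
    dsimp only at hm h0 hl ⊢
    set t'' : ℕ → ℝ := fun i => t (min i n) with ht''
    have hm'' : Monotone t'' := fun i j hij => hm (by omega)
    have hval : ∀ i, t'' i ∈ Set.Icc (0:ℝ) T := by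
      intro i
      constructor
      · rw [← h0]; exact hm (Nat.zero_le _)
      · rw [← hl]; exact hm (Nat.min_le_right i n)
    have hpsum : psum p (y ∘ τ) t n = psum p y (fun i => τ (t'' i)) n := by
      refine Finset.sum_congr rfl fun i hi => ?_
      have hi' := Finset.mem_range.mp hi
      have e1 : t'' i = t i := by simp only [ht'']; congr 1; omega
      have e2 : t'' (i+1) = t (i+1) := by simp only [ht'']; congr 1; omega
      rw [← e1, ← e2]; rfl
    rw [hpsum]
    refine le_trans (le_of_eq rfl) ?_
    rw [pVar_eq p y 0 S]
    refine le_iSup_of_le ⟨(n, fun i => τ (t'' i)),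
      fun i j hij => hτmono (hval i) (hval j) (hm'' hij), ?_, ?_⟩ le_rfl
    · dsimp only
      rw [show t'' 0 = t 0 from by simp [ht''], h0, hτ0]
    · dsimp only
      rw [show t'' n = t n from by simp [ht''], hl, hτT]
  -- lower bound, second part
  have low2 : (∑' t : J, pVar p y (lm (t : ℝ)) (τ (t : ℝ))) ≤ pVar p y 0 S := by
    rw [ENNReal.tsum_eq_iSup_sum]
    refine iSup_le fun F => ?_
    have main : ∀ F : Finset J, ∀ c : ℝ, (∀ t ∈ F, τ (t : ℝ) ≤ c) → c ≤ S →
        (∑ t ∈ F, pVar p y (lm (t : ℝ)) (τ (t : ℝ))) ≤ pVar p y 0 c := by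
      intro F
      induction F using Finset.induction_on_max with
      | empty => intro c hc hcS; simp
      | insert a F ha ih =>
        intro c hc hcS
        have haJ : (a : ℝ) ∈ J := a.2
        have haIoc : (a : ℝ) ∈ Set.Ioc 0 T := haJ.1
        have hanotF : a ∉ F := fun h => lt_irrefl a (ha a h)
        rw [Finset.sum_insert hanotF]
        have hstep : ∀ t ∈ F, τ (t : ℝ) ≤ lm (a : ℝ) := by
          intro t htF
          have htJ : (t : ℝ) ∈ J := t.2
          refine hτle_lm _ ⟨htJ.1.1.le, htJ.1.2⟩ _ haIoc ?_
          exact Subtype.coe_lt_coe.mpr (ha t htF)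
        have h1 : (∑ t ∈ F, pVar p y (lm (t : ℝ)) (τ (t : ℝ))) ≤ pVar p y 0 (lm (a:ℝ)) :=
          ih (lm (a : ℝ)) hstep (le_trans (hlm_le _ haIoc) (le_trans (hc a (Finset.mem_insert_self a F)) hcS))
        have h2 : pVar p y 0 (lm (a:ℝ)) + pVar p y (lm (a:ℝ)) (τ (a:ℝ)) ≤ pVar p y 0 (τ (a:ℝ)) :=
          pVar_add_pVar_le (hlm_nonneg _ haIoc) (hlm_le _ haIoc)
        calc pVar p y (lm (a:ℝ)) (τ (a:ℝ)) + ∑ t ∈ F, pVar p y (lm (t : ℝ)) (τ (t : ℝ))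
            ≤ pVar p y (lm (a:ℝ)) (τ (a:ℝ)) + pVar p y 0 (lm (a:ℝ)) := by
              exact add_le_add_right h1 _
          _ = pVar p y 0 (lm (a:ℝ)) + pVar p y (lm (a:ℝ)) (τ (a:ℝ)) := add_comm _ _
          _ ≤ pVar p y 0 (τ (a:ℝ)) := h2
          _ ≤ pVar p y 0 c := pVar_le_pVar_left (hτmem _ ⟨haIoc.1.le, haIoc.2⟩).1
              (hc a (Finset.mem_insert_self a F))
    exact main F S (fun t _ => (hτmem _ ⟨t.2.1.1.le, t.2.1.2⟩).2) le_rfl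
  refine ⟨max_le low1 low2, ?_⟩
  -- upper bound
  have hp0 : (0:ℝ) ≤ p := le_trans zero_le_one hp
  have hppos : (0:ℝ) < p := lt_of_lt_of_le zero_lt_one hp
  set C3 : ℝ≥0∞ := (3 : ℝ≥0∞) ^ (p - 1) with hC3
  have hC3one : (1:ℝ≥0∞) ≤ C3 := by
    calc (1:ℝ≥0∞) = (3:ℝ≥0∞) ^ (0:ℝ) := by rw [ENNReal.rpow_zero]
      _ ≤ C3 := ENNReal.rpow_le_rpow_of_exponent_le (by norm_num) (by linarith)
  set X := pVar p (y ∘ τ) 0 T with hXdef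
  set SJ := ∑' t : J, pVar p y (sSup (τ '' Set.Ico 0 (t : ℝ))) (τ (t : ℝ)) with hSJ
  have hlm0 : lm 0 = 0 := by
    show sSup (τ '' Set.Ico 0 0) = 0
    rw [Set.Ico_self, Set.image_empty, Real.sSup_empty]
  have hlm_le' : ∀ t ∈ Set.Icc (0:ℝ) T, lm t ≤ τ t := by
    intro t ht
    rcases eq_or_lt_of_le ht.1 with h | h
    · rw [← h, hlm0, hτ0]
    · exact hlm_le t ⟨h, ht.2⟩
  have hlm_nonneg' : ∀ t ∈ Set.Icc (0:ℝ) T, 0 ≤ lm t := by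
    intro t ht
    rcases eq_or_lt_of_le ht.1 with h | h
    · rw [← h, hlm0]
    · exact hlm_nonneg t ⟨h, ht.2⟩
  -- the generalized right inverse of τ
  set σf : ℝ → ℝ := fun v => sInf {u : ℝ | u ∈ Set.Icc 0 T ∧ v ≤ τ u} with hσf
  have hset_ne : ∀ v : ℝ, v ≤ S → ({u : ℝ | u ∈ Set.Icc 0 T ∧ v ≤ τ u}).Nonempty :=
    fun v hv => ⟨T, ⟨hT.le, le_rfl⟩, by rw [hτT]; exact hv⟩
  have hset_bdd : ∀ v : ℝ, BddBelow {u : ℝ | u ∈ Set.Icc 0 T ∧ v ≤ τ u} :=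
    fun v => ⟨0, fun u hu => hu.1.1⟩
  have hσ_icc : ∀ v : ℝ, 0 ≤ v → v ≤ S → σf v ∈ Set.Icc (0:ℝ) T := by
    intro v h0v hvS
    exact ⟨le_csInf (hset_ne v hvS) fun u hu => hu.1.1,
      csInf_le (hset_bdd v) ⟨⟨hT.le, le_rfl⟩, by rw [hτT]; exact hvS⟩⟩
  have hσ_mono : ∀ v w : ℝ, v ≤ w → w ≤ S → σf v ≤ σf w := by
    intro v w hvw hwS
    exact csInf_le_csInf (hset_bdd v) (hset_ne w hwS) (fun u hu => ⟨hu.1, le_trans hvw hu.2⟩)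
  have hσ_ge : ∀ v : ℝ, 0 ≤ v → v ≤ S → v ≤ τ (σf v) := by
    intro v h0v hvS
    rcases eq_or_lt_of_le (hσ_icc v h0v hvS).2 with hT' | hT'
    · rw [hT', hτT]; exact hvS
    · refine ge_of_tendsto (hτrc (σf v) ⟨(hσ_icc v h0v hvS).1, hT'⟩) ?_
      have hev : ∀ᶠ u in nhdsWithin (σf v) (Set.Ioi (σf v)), u < T :=
        ((eventually_lt_nhds hT').filter_mono nhdsWithin_le_nhds)
      refine (hev.and (eventually_mem_nhdsWithin)).mono ?_
      rintro u ⟨huT, hu⟩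
      obtain ⟨w, hw, hwlt⟩ := exists_lt_of_csInf_lt (hset_ne v hvS) (show σf v < u from hu)
      exact le_trans hw.2 (hτmono hw.1 ⟨le_trans hw.1.1 hwlt.le, huT.le⟩ hwlt.le)
  have hσ_lm : ∀ v : ℝ, 0 ≤ v → v ≤ S → lm (σf v) ≤ v := by
    intro v h0v hvS
    rcases eq_or_lt_of_le (hσ_icc v h0v hvS).1 with h0' | h0'
    · rw [← h0', hlm0]; exact h0v
    · refine csSup_le ⟨τ 0, 0, ⟨le_rfl, h0'⟩, rfl⟩ ?_
      rintro w ⟨u, hu, rfl⟩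
      by_contra hlt
      push_neg at hlt
      have hueT : u ≤ T := le_trans hu.2.le (hσ_icc v h0v hvS).2
      have : σf v ≤ u := csInf_le (hset_bdd v) ⟨⟨hu.1, hueT⟩, hlt.le⟩
      exact absurd this (not_le.mpr hu.2)
  have upper : pVar p y 0 S ≤ C3 * X + C3 * SJ := by
    rw [pVar_eq p y 0 S]
    refine iSup_le fun q => ?_
    obtain ⟨⟨n, s0⟩, hs0m, hs00, hs0l⟩ := q
    dsimp only at hs0m hs00 hs0l ⊢
    set s : ℕ → ℝ := fun j => s0 (min j n) with hs
    have hsm : Monotone s := fun i j hij => hs0m (min_le_min hij le_rfl)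
    have hs0eq : s 0 = 0 := by
      show s0 (min 0 n) = 0
      rw [Nat.zero_min]; exact hs00
    have hsn : s n = S := by
      show s0 (min n n) = S
      rw [Nat.min_self]; exact hs0l
    have hsmem : ∀ j, s j ∈ Set.Icc (0:ℝ) S := fun j =>
      ⟨by rw [← hs00]; exact hs0m (Nat.zero_le _),
       by rw [← hs0l]; exact hs0m (Nat.min_le_right j n)⟩
    have hpeq : psum p y s0 n = psum p y s n := by
      refine Finset.sum_congr rfl fun i hi => ?_
      have hi' := Finset.mem_range.mp hi
      have e1 : s i = s0 i := by show s0 (min i n) = s0 i; congr 1; omega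
      have e2 : s (i+1) = s0 (i+1) := by show s0 (min (i+1) n) = s0 (i+1); congr 1; omega
      rw [← e1, ← e2]
    rw [hpeq]
    set tj : ℕ → ℝ := fun j => σf (s j) with htj
    have htjm : Monotone tj := fun i j hij => hσ_mono _ _ (hsm hij) (hsmem j).2
    have htjicc : ∀ j, tj j ∈ Set.Icc (0:ℝ) T := fun j => hσ_icc _ (hsmem j).1 (hsmem j).2
    have hsb : ∀ j, s j ≤ τ (tj j) := fun j => hσ_ge _ (hsmem j).1 (hsmem j).2
    have hsa : ∀ j, lm (tj j) ≤ s j := fun j => hσ_lm _ (hsmem j).1 (hsmem j).2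
    have hτtj_icc : ∀ j, τ (tj j) ∈ Set.Icc (0:ℝ) S := fun j => ⟨(hτmem _ (htjicc j)).1, (hτmem _ (htjicc j)).2⟩
    have hlm_icc : ∀ j, lm (tj j) ∈ Set.Icc (0:ℝ) S := fun j =>
      ⟨hlm_nonneg' _ (htjicc j), le_trans (hlm_le' _ (htjicc j)) (hτtj_icc j).2⟩
    set G : Finset ℕ := (Finset.range n).filter (fun j => tj j < tj (j+1)) with hG
    set notG : Finset ℕ := (Finset.range n).filter (fun j => ¬ tj j < tj (j+1)) with hnotG
    set inc : ℕ → ℝ≥0∞ := fun j => edist (y (s j)) (y (s (j+1))) ^ p with hinc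
    set A : ℕ → ℝ≥0∞ := fun j => edist (y (s j)) (y (τ (tj j))) ^ p with hA
    set B : ℕ → ℝ≥0∞ := fun j => edist (y (lm (tj (j+1)))) (y (s (j+1))) ^ p with hB
    set M : ℕ → ℝ≥0∞ := fun j => edist (y (τ (tj j))) (y (lm (tj (j+1)))) ^ p with hM
    have hsplit : psum p y s n = (∑ j ∈ G, inc j) + ∑ j ∈ notG, inc j :=
      (Finset.sum_filter_add_sum_filter_not (Finset.range n) (fun j => tj j < tj (j+1)) inc).symm
    have hGsum : ∑ j ∈ G, inc j ≤ C3 * ((∑ j ∈ G, A j) + (∑ j ∈ G, M j) + (∑ j ∈ G, B j)) := by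
      have hterm : ∀ j ∈ G, inc j ≤ C3 * (A j + M j + B j) := by
        intro j hj
        have tri : edist (y (s j)) (y (s (j+1))) ≤
            edist (y (s j)) (y (τ (tj j))) + edist (y (τ (tj j))) (y (lm (tj (j+1)))) +
            edist (y (lm (tj (j+1)))) (y (s (j+1))) := edist_triangle4 _ _ _ _
        calc inc j ≤ (edist (y (s j)) (y (τ (tj j))) + edist (y (τ (tj j))) (y (lm (tj (j+1)))) +
              edist (y (lm (tj (j+1)))) (y (s (j+1)))) ^ p := ENNReal.rpow_le_rpow tri hp0
          _ ≤ C3 * (A j + M j + B j) := add3_rpow_le hp _ _ _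
      calc ∑ j ∈ G, inc j ≤ ∑ j ∈ G, C3 * (A j + M j + B j) := Finset.sum_le_sum hterm
        _ = C3 * ∑ j ∈ G, (A j + M j + B j) := (Finset.mul_sum _ _ _).symm
        _ = C3 * ((∑ j ∈ G, A j) + (∑ j ∈ G, M j) + (∑ j ∈ G, B j)) := by
            rw [Finset.sum_add_distrib, Finset.sum_add_distrib]
    have hUex : ∀ j, tj j < tj (j+1) → ∀ m : ℕ, ∃ u : ℝ, tj j ≤ u ∧ u < tj (j+1) ∧
        lm (tj (j+1)) - 1/(m+1) < τ u ∧ τ u ≤ lm (tj (j+1)) := by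
      intro j hjlt m
      have hIoc : tj (j+1) ∈ Set.Ioc (0:ℝ) T := ⟨lt_of_le_of_lt (htjicc j).1 hjlt, (htjicc (j+1)).2⟩
      have hne : (τ '' Set.Ico 0 (tj (j+1))).Nonempty := ⟨τ 0, 0, ⟨le_rfl, hIoc.1⟩, rfl⟩
      have hbdd : BddAbove (τ '' Set.Ico 0 (tj (j+1))) := ⟨τ (tj (j+1)), hlm_bdd _ hIoc⟩
      have hlt : lm (tj (j+1)) - 1/(m+1) < sSup (τ '' Set.Ico 0 (tj (j+1))) := by
        have hm1 : (0:ℝ) < 1/(m+1) := by positivity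
        show lm (tj (j+1)) - 1/(m+1) < lm (tj (j+1))
        linarith
      obtain ⟨w, ⟨u0, hu0, rfl⟩, hwgt⟩ := exists_lt_of_lt_csSup hne hlt
      have hmaxmem : max u0 (tj j) ∈ Set.Ico 0 (tj (j+1)) :=
        ⟨le_trans (htjicc j).1 (le_max_right _ _), max_lt hu0.2 hjlt⟩
      refine ⟨max u0 (tj j), le_max_right _ _, max_lt hu0.2 hjlt, ?_, ?_⟩
      · refine lt_of_lt_of_le hwgt ?_
        exact hτmono ⟨hu0.1, le_trans hu0.2.le (htjicc (j+1)).2⟩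
          ⟨hmaxmem.1, le_trans hmaxmem.2.le (htjicc (j+1)).2⟩ (le_max_left _ _)
      · exact le_csSup hbdd ⟨max u0 (tj j), hmaxmem, rfl⟩
    set U : ℕ → ℕ → ℝ := fun m j => if h : tj j < tj (j+1) then (hUex j h m).choose else tj j with hU
    have hU1 : ∀ m j, tj j ≤ U m j := by
      intro m j; simp only [hU]; split_ifs with h
      exacts [(hUex j h m).choose_spec.1, le_rfl]
    have hU2 : ∀ m j, U m j ≤ tj (j+1) := by
      intro m j; simp only [hU]; split_ifs with h
      exacts [(hUex j h m).choose_spec.2.1.le, htjm (by omega)]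
    have hU3 : ∀ m j, tj j < tj (j+1) →
        lm (tj (j+1)) - 1/(m+1) < τ (U m j) ∧ τ (U m j) ≤ lm (tj (j+1))  := by
      intro m j h; simp only [hU]; rw [dif_pos h]
      exact ⟨(hUex j h m).choose_spec.2.2.1, (hUex j h m).choose_spec.2.2.2⟩
    have hUicc : ∀ m j, U m j ∈ Set.Icc (0:ℝ) T := fun m j =>
      ⟨le_trans (htjicc j).1 (hU1 m j), le_trans (hU2 m j) (htjicc (j+1)).2⟩
    have hMle : ∀ m : ℕ, (∑ j ∈ G, edist (y (τ (tj j))) (y (τ (U m j))) ^ p) ≤ X := by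
      intro m
      set w : ℕ → ℝ := fun i => if 2*n ≤ i then tj n else if i % 2 = 0 then tj (i/2) else U m (i/2) with hw
      have hwm : Monotone w := by
        refine monotone_nat_of_le_succ fun i => ?_
        rcases le_or_gt (2*n) i with h2n | h2n
        · simp only [hw]
          rw [if_pos h2n, if_pos (by omega : 2*n ≤ i+1)]
        · rcases Nat.even_or_odd i with ⟨j, hj⟩ | ⟨j, hj⟩
          · have e1 : w i = tj j := by
              simp only [hw]; rw [if_neg (by omega), if_pos (by omega)]; congr 1; omega
            have e2 : w (i+1) = U m j := by
              simp only [hw]; rw [if_neg (by omega), if_neg (by omega)]; congr 1; omega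
            rw [e1, e2]; exact hU1 m j
          · have e1 : w i = U m j := by
              simp only [hw]; rw [if_neg (by omega), if_neg (by omega)]; congr 1; omega
            rcases le_or_gt (2*n) (i+1) with h' | h'
            · have e2 : w (i+1) = tj n := by simp only [hw]; rw [if_pos h']
              have hjn : j + 1 = n := by omega
              rw [e1, e2, ← hjn]; exact hU2 m j
            · have e2 : w (i+1) = tj (j+1) := by
                simp only [hw]; rw [if_neg (by omega), if_pos (by omega)]; congr 1; omega
              rw [e1, e2]; exact hU2 m j
      have hw0 : (0:ℝ) ≤ w 0 := by
        by_cases h : 2*n ≤ 0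
        · simp only [hw, if_pos h]; exact (htjicc n).1
        · simp only [hw, if_neg h, if_pos (show 0 % 2 = 0 from rfl)]; exact (htjicc _).1
      have hwn : w (2*n) ≤ T := by
        simp only [hw]; rw [if_pos (le_refl (2*n))]; exact (htjicc n).2
      have hterm : ∀ j ∈ G, edist (y (τ (tj j))) (y (τ (U m j))) ^ p
          = edist ((y ∘ τ) (w (2*j))) ((y ∘ τ) (w (2*j+1))) ^ p := by
        intro j hj
        have hjn : j < n := Finset.mem_range.mp (Finset.mem_filter.mp hj).1
        have e1 : w (2*j) = tj j := by
          simp only [hw]; rw [if_neg (by omega), if_pos (by omega)]; congr 1; omega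
        have e2 : w (2*j+1) = U m j := by
          simp only [hw]; rw [if_neg (by omega), if_neg (by omega)]; congr 1; omega
        rw [e1, e2]; rfl
      calc (∑ j ∈ G, edist (y (τ (tj j))) (y (τ (U m j))) ^ p)
          = ∑ j ∈ G, edist ((y ∘ τ) (w (2*j))) ((y ∘ τ) (w (2*j+1))) ^ p :=
            Finset.sum_congr rfl hterm
        _ = ∑ i ∈ G.image (fun j => 2*j), edist ((y ∘ τ) (w i)) ((y ∘ τ) (w (i+1))) ^ p := by
            rw [Finset.sum_image (by intros a _ b _ h; beta_reduce at h; omega)]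
        _ ≤ pVar p (y ∘ τ) 0 T := by
            refine subset_sum_le_pVar (n := 2*n) hwm hw0 hwn ?_
            intro i hi
            obtain ⟨j, hjG, rfl⟩ := Finset.mem_image.mp hi
            have : j < n := Finset.mem_range.mp (Finset.mem_filter.mp hjG).1
            exact Finset.mem_range.mpr (by omega)
    have hMtend : Filter.Tendsto (fun m => ∑ j ∈ G, edist (y (τ (tj j))) (y (τ (U m j))) ^ p)
        Filter.atTop (nhds (∑ j ∈ G, M j)) := by
      refine tendsto_finset_sum G fun j hj => ?_
      have hjlt : tj j < tj (j+1) := (Finset.mem_filter.mp hj).2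
      have h1 : Filter.Tendsto (fun m : ℕ => τ (U m j)) Filter.atTop (nhds (lm (tj (j+1)))) := by
        have hlow : Filter.Tendsto (fun m : ℕ => lm (tj (j+1)) - 1/(m+1)) Filter.atTop
            (nhds (lm (tj (j+1)))) := by
          have := tendsto_const_nhds (x := lm (tj (j+1))) (f := Filter.atTop (α := ℕ))
          have h2 := this.sub tendsto_one_div_add_atTop_nhds_zero_nat
          simpa using h2
        exact tendsto_of_tendsto_of_tendsto_of_le_of_le hlow tendsto_const_nhds
          (fun m => (hU3 m j hjlt).1.le) (fun m => (hU3 m j hjlt).2)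
      have h2 : Filter.Tendsto (fun m : ℕ => y (τ (U m j))) Filter.atTop
          (nhds (y (lm (tj (j+1))))) := by
        have hcw : ContinuousWithinAt y (Set.Icc 0 S) (lm (tj (j+1))) := hy _ (hlm_icc (j+1))
        refine hcw.tendsto.comp ?_
        exact tendsto_nhdsWithin_of_tendsto_nhds_of_eventually_within _ h1
          (Filter.Eventually.of_forall (fun m => hτmem _ (hUicc m j) |>.imp id id))
      exact (ENNReal.continuous_rpow_const.tendsto _).comp
        (Filter.Tendsto.edist tendsto_const_nhds h2)
    have hMX : (∑ j ∈ G, M j) ≤ X :=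
      le_of_tendsto hMtend (Filter.Eventually.of_forall hMle)
    have hK : (∑ j ∈ notG, inc j) + (∑ j ∈ G, A j) + (∑ j ∈ G, B j) ≤ SJ := by
      set Tv : Finset ℝ := (Finset.range (n+1)).image tj with hTv
      have hmapsto1 : ∀ j ∈ notG, tj j ∈ Tv := fun j hj =>
        Finset.mem_image_of_mem tj (Finset.mem_range.mpr (by
          have := Finset.mem_range.mp (Finset.mem_filter.mp hj).1; omega))
      have hmapsto2 : ∀ j ∈ G, tj j ∈ Tv := fun j hj =>
        Finset.mem_image_of_mem tj (Finset.mem_range.mpr (by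
          have := Finset.mem_range.mp (Finset.mem_filter.mp hj).1; omega))
      have hmapsto3 : ∀ j ∈ G, tj (j+1) ∈ Tv := fun j hj => by
        have := Finset.mem_range.mp (Finset.mem_filter.mp hj).1
        exact Finset.mem_image.mpr ⟨j+1, Finset.mem_range.mpr (by omega), rfl⟩
      have e1 : ∑ j ∈ notG, inc j
          = ∑ v ∈ Tv, ∑ j ∈ notG.filter (fun j => tj j = v), inc j :=
        (Finset.sum_fiberwise_of_maps_to hmapsto1 inc).symm
      have e2 : ∑ j ∈ G, A j = ∑ v ∈ Tv, ∑ j ∈ G.filter (fun j => tj j = v), A j :=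
        (Finset.sum_fiberwise_of_maps_to hmapsto2 A).symm
      have e3 : ∑ j ∈ G, B j = ∑ v ∈ Tv, ∑ j ∈ G.filter (fun j => tj (j+1) = v), B j :=
        (Finset.sum_fiberwise_of_maps_to hmapsto3 B).symm
      have heqnotG : ∀ j ∈ notG, tj (j+1) = tj j := by
        intro j hjng'
        have hf := Finset.mem_filter.mp hjng'
        exact le_antisymm (not_lt.mp hf.2) (htjm (by omega))
      have hCv : ∀ v ∈ Tv,
          (∑ j ∈ notG.filter (fun j => tj j = v), inc j)
          + (∑ j ∈ G.filter (fun j => tj j = v), A j)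
          + (∑ j ∈ G.filter (fun j => tj (j+1) = v), B j)
          ≤ (if v ∈ J then pVar p y (lm v) (τ v) else 0) := by
        intro v hv
        obtain ⟨j0, hj0r, hj0v⟩ := Finset.mem_image.mp hv
        have hj0n : j0 ≤ n := by have := Finset.mem_range.mp hj0r; omega
        have hvicc : v ∈ Set.Icc (0:ℝ) T := hj0v ▸ htjicc j0
        by_cases hvJ : v ∈ J
        · rw [if_pos hvJ]
          set fib : Finset ℕ := (Finset.range (n+1)).filter (fun j => tj j = v) with hfib
          have hfibne : fib.Nonempty := ⟨j0, Finset.mem_filter.mpr ⟨hj0r, hj0v⟩⟩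
          set l := fib.min' hfibne with hldef
          set r := fib.max' hfibne with hrdef
          have hlmem := fib.min'_mem hfibne
          have hrmem := fib.max'_mem hfibne
          have hln : l ≤ n := by
            have := Finset.mem_range.mp (Finset.mem_filter.mp hlmem).1; omega
          have hrn : r ≤ n := by
            have := Finset.mem_range.mp (Finset.mem_filter.mp hrmem).1; omega
          have htjl : tj l = v := (Finset.mem_filter.mp hlmem).2
          have htjr : tj r = v := (Finset.mem_filter.mp hrmem).2
          have hlr : l ≤ r := Finset.min'_le _ _ hrmem
          have hmemfib : ∀ j, j ≤ n → tj j = v → l ≤ j ∧ j ≤ r := fun j hjn hjv =>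
            ⟨Finset.min'_le _ _ (Finset.mem_filter.mpr ⟨Finset.mem_range.mpr (by omega), hjv⟩),
             Finset.le_max' _ _ (Finset.mem_filter.mpr ⟨Finset.mem_range.mpr (by omega), hjv⟩)⟩
          have hlml : lm v ≤ s l := by rw [← htjl]; exact hsa l
          have hsr : s r ≤ τ v := by rw [← htjr]; exact hsb r
          set w2 : ℕ → ℝ := fun i => if i = 0 then lm v else if i ≤ r - l + 1 then s (l + (i - 1)) else τ v with hw2
          have hw2zero : w2 0 = lm v := by simp [hw2]
          have hw2one : w2 1 = s l := by
            simp only [hw2]; rw [if_neg one_ne_zero, if_pos (by omega : 1 ≤ r - l + 1)]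
            norm_num
          have hw2m : Monotone w2 := by
            refine monotone_nat_of_le_succ fun i => ?_
            rcases Nat.eq_zero_or_pos i with rfl | hi
            · rw [hw2zero, hw2one]; exact hlml
            · simp only [hw2, if_neg (by omega : ¬ i = 0), if_neg (by omega : ¬ i + 1 = 0)]
              split_ifs with h1 h2 h3
              · exact hsm (by omega)
              · have heqr : l + (i-1) = r := by omega
                rw [heqr]; exact hsr
              · omega
              · exact le_rfl
          have hw2last : w2 (r - l + 2) = τ v := by
            simp only [hw2]; rw [if_neg (by omega), if_neg (by omega)]
          have hpsle : psum p y w2 (r - l + 2) ≤ pVar p y (lm v) (τ v) :=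
            psum_le_pVar hw2m (le_of_eq hw2zero.symm) (le_of_eq hw2last)
          set f2 : ℕ → ℝ≥0∞ := fun i => edist (y (w2 i)) (y (w2 (i+1))) ^ p with hf2
          have hexp : psum p y w2 (r - l + 2)
              = (∑ i ∈ Finset.range (r - l), f2 (i+1)) + f2 0 + f2 (r - l + 1) := by
            show ∑ i ∈ Finset.range (r-l+2), f2 i = _
            rw [Finset.sum_range_succ, Finset.sum_range_succ']
          have hf0 : f2 0 = edist (y (lm v)) (y (s l)) ^ p := by
            simp only [hf2]; rw [hw2zero, hw2one]
          have hw2r1 : w2 (r - l + 1) = s r := by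
            simp only [hw2]; rw [if_neg (by omega), if_pos (le_refl _)]; congr 1; omega
          have hflast : f2 (r - l + 1) = edist (y (s r)) (y (τ v)) ^ p := by
            simp only [hf2]; rw [hw2r1, hw2last]
          -- bound for the B-sum
          have hc3 : ∑ j ∈ G.filter (fun j => tj (j+1) = v), B j ≤ f2 0 := by
            rcases (G.filter (fun j => tj (j+1) = v)).eq_empty_or_nonempty with he | ⟨j, hj⟩
            · rw [he]; simp
            · have hjmem := Finset.mem_filter.mp hj
              have hjG := Finset.mem_filter.mp hjmem.1
              have hjn : j < n := Finset.mem_range.mp hjG.1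
              have hjv : tj (j+1) = v := hjmem.2
              have hjlt : tj j < tj (j+1) := hjG.2
              have hsingle : G.filter (fun j => tj (j+1) = v) = {j} := by
                apply Finset.eq_singleton_iff_unique_mem.mpr
                refine ⟨hj, fun j' hj' => ?_⟩
                have hj'mem := Finset.mem_filter.mp hj'
                have hj'G := Finset.mem_filter.mp hj'mem.1
                by_contra hne
                rcases lt_or_gt_of_ne hne with hltc | hltc
                · have h1 := htjm (show j'+1 ≤ j by omega)
                  rw [hj'mem.2] at h1
                  have h2 := hjG.2
                  rw [hjv] at h2
                  exact absurd (lt_of_le_of_lt h1 h2) (lt_irrefl v)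
                · have h1 := htjm (show j+1 ≤ j' by omega)
                  rw [hjv] at h1
                  have h2 := hj'G.2
                  rw [hj'mem.2] at h2
                  exact absurd (lt_of_le_of_lt h1 h2) (lt_irrefl v)
              rw [hsingle, Finset.sum_singleton, hf0]
              have hleq : l = j + 1 := by
                have h1 : l ≤ j+1 := (hmemfib (j+1) (by omega) hjv).1
                rcases eq_or_lt_of_le h1 with h | h
                · exact h
                · exfalso
                  have hle : tj l ≤ tj j := htjm (by omega)
                  rw [htjl] at hle
                  have h2 := hjG.2; rw [hjv] at h2
                  exact absurd (lt_of_le_of_lt hle h2) (lt_irrefl v)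
              have hBj : B j = edist (y (lm v)) (y (s l)) ^ p := by
                simp only [hB]; rw [hjv, hleq]
              rw [hBj]
          -- bound for the A-sum
          have hc2 : ∑ j ∈ G.filter (fun j => tj j = v), A j ≤ f2 (r - l + 1) := by
            rcases (G.filter (fun j => tj j = v)).eq_empty_or_nonempty with he | ⟨j, hj⟩
            · rw [he]; simp
            · have hjmem := Finset.mem_filter.mp hj
              have hjG := Finset.mem_filter.mp hjmem.1
              have hjn : j < n := Finset.mem_range.mp hjG.1
              have hjv : tj j = v := hjmem.2
              have hsingle : G.filter (fun j => tj j = v) = {j} := by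
                apply Finset.eq_singleton_iff_unique_mem.mpr
                refine ⟨hj, fun j' hj' => ?_⟩
                have hj'mem := Finset.mem_filter.mp hj'
                have hj'G := Finset.mem_filter.mp hj'mem.1
                by_contra hne
                rcases lt_or_gt_of_ne hne with hltc | hltc
                · have h1 := htjm (show j'+1 ≤ j by omega)
                  rw [hjv] at h1
                  have h2 := hj'G.2
                  rw [hj'mem.2] at h2
                  exact absurd (lt_of_lt_of_le h2 h1) (lt_irrefl v)
                · have h1 := htjm (show j+1 ≤ j' by omega)
                  rw [hj'mem.2] at h1
                  have h2 := hjG.2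
                  rw [hjv] at h2
                  exact absurd (lt_of_lt_of_le h2 h1) (lt_irrefl v)
              rw [hsingle, Finset.sum_singleton, hflast]
              have hjr : j = r := by
                have h1 : j ≤ r := (hmemfib j (by omega) hjv).2
                rcases eq_or_lt_of_le h1 with h | h
                · exact h
                · exfalso
                  have hle : tj (j+1) ≤ tj r := htjm (by omega)
                  rw [htjr] at hle
                  have h2 := hjG.2; rw [hjv] at h2
                  exact absurd (lt_of_lt_of_le h2 hle) (lt_irrefl v)
              have hAj : A j = edist (y (s r)) (y (τ v)) ^ p := by
                simp only [hA]; rw [hjv, hjr]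
              rw [hAj]
          -- bound for the inner sum
          have hc1 : ∑ j ∈ notG.filter (fun j => tj j = v), inc j
              ≤ ∑ i ∈ Finset.range (r - l), f2 (i+1) := by
            set s1 := notG.filter (fun j => tj j = v) with hs1
            have hkey : ∀ j ∈ s1, l ≤ j ∧ j + 1 ≤ r := by
              intro j hjs
              have hjf := Finset.mem_filter.mp hjs
              have heq : tj (j+1) = v := (heqnotG j hjf.1).trans hjf.2
              have hjn : j < n := Finset.mem_range.mp (Finset.mem_filter.mp hjf.1).1
              exact ⟨(hmemfib j (by omega) hjf.2).1, (hmemfib (j+1) (by omega) heq).2⟩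
            have hterm : ∀ j ∈ s1, inc j = f2 (j - l + 1) := by
              intro j hjs
              obtain ⟨hlj, hjr⟩ := hkey j hjs
              have ea : w2 (j - l + 1) = s j := by
                simp only [hw2]; rw [if_neg (by omega), if_pos (by omega)]; congr 1; omega
              have eb : w2 (j - l + 1 + 1) = s (j+1) := by
                simp only [hw2]; rw [if_neg (by omega), if_pos (by omega)]; congr 1; omega
              simp only [hinc, hf2]
              rw [ea, eb]
            have hinj : ∀ a ∈ s1, ∀ b ∈ s1, a - l = b - l → a = b := by
              intro a ha b hb hab
              have := (hkey a ha).1; have := (hkey b hb).1; omega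
            calc ∑ j ∈ s1, inc j = ∑ j ∈ s1, f2 (j - l + 1) := Finset.sum_congr rfl hterm
              _ = ∑ i ∈ s1.image (fun j => j - l), f2 (i + 1) := (Finset.sum_image (f := fun i => f2 (i+1)) hinj).symm
              _ ≤ ∑ i ∈ Finset.range (r - l), f2 (i+1) := by
                  refine Finset.sum_le_sum_of_subset ?_
                  intro i hi
                  obtain ⟨j, hjs, rfl⟩ := Finset.mem_image.mp hi
                  obtain ⟨h1, h2⟩ := hkey j hjs
                  exact Finset.mem_range.mpr (by omega)
          calc (∑ j ∈ notG.filter (fun j => tj j = v), inc j)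
              + (∑ j ∈ G.filter (fun j => tj j = v), A j)
              + (∑ j ∈ G.filter (fun j => tj (j+1) = v), B j)
              ≤ (∑ i ∈ Finset.range (r - l), f2 (i+1)) + f2 (r - l + 1) + f2 0 :=
                add_le_add (add_le_add hc1 hc2) hc3
            _ = (∑ i ∈ Finset.range (r - l), f2 (i+1)) + f2 0 + f2 (r - l + 1) := by ring
            _ = psum p y w2 (r - l + 2) := hexp.symm
            _ ≤ pVar p y (lm v) (τ v) := hpsle
        · rw [if_neg hvJ]
          have hvab : lm v = τ v := by
            rcases eq_or_lt_of_le hvicc.1 with h0v | h0v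
            · rw [← h0v, hlm0, hτ0]
            · by_contra hne
              exact hvJ ⟨⟨h0v, hvicc.2⟩, lt_of_le_of_ne (hlm_le' v hvicc) hne⟩
          have hseq : ∀ j, tj j = v → s j = τ v := by
            intro j hjv
            have h1 := hsa j; have h2 := hsb j
            rw [hjv] at h1 h2
            rw [hvab] at h1
            exact le_antisymm h2 h1
          have z1 : ∑ j ∈ notG.filter (fun j => tj j = v), inc j = 0 := by
            refine Finset.sum_eq_zero fun j hjs => ?_
            have hjf := Finset.mem_filter.mp hjs
            have heq : tj (j+1) = v := (heqnotG j hjf.1).trans hjf.2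
            have e1' := hseq j hjf.2
            have e2' := hseq (j+1) heq
            simp only [hinc]
            rw [e1', e2', edist_self, ENNReal.zero_rpow_of_pos hppos]
          have z2 : ∑ j ∈ G.filter (fun j => tj j = v), A j = 0 := by
            refine Finset.sum_eq_zero fun j hjs => ?_
            have hjf := Finset.mem_filter.mp hjs
            have e1' := hseq j hjf.2
            simp only [hA]
            rw [hjf.2, e1', edist_self, ENNReal.zero_rpow_of_pos hppos]
          have z3 : ∑ j ∈ G.filter (fun j => tj (j+1) = v), B j = 0 := by
            refine Finset.sum_eq_zero fun j hjs => ?_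
            have hjf := Finset.mem_filter.mp hjs
            have e2' := hseq (j+1) hjf.2
            simp only [hB]
            rw [hjf.2, e2', hvab, edist_self, ENNReal.zero_rpow_of_pos hppos]
          rw [z1, z2, z3]
          simp
      have hsum_le : ∑ v ∈ Tv, ((∑ j ∈ notG.filter (fun j => tj j = v), inc j)
          + (∑ j ∈ G.filter (fun j => tj j = v), A j)
          + (∑ j ∈ G.filter (fun j => tj (j+1) = v), B j)) ≤ SJ := by
        calc ∑ v ∈ Tv, ((∑ j ∈ notG.filter (fun j => tj j = v), inc j)
              + (∑ j ∈ G.filter (fun j => tj j = v), A j)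
              + (∑ j ∈ G.filter (fun j => tj (j+1) = v), B j))
            ≤ ∑ v ∈ Tv, (if v ∈ J then pVar p y (lm v) (τ v) else 0) := Finset.sum_le_sum hCv
          _ = ∑ v ∈ Tv.filter (fun v => v ∈ J), pVar p y (lm v) (τ v) :=
              (Finset.sum_filter _ _).symm
          _ ≤ SJ := by
              have hsub : ∀ v ∈ Tv.filter (fun v => v ∈ J), v ∈ J :=
                fun v hv => (Finset.mem_filter.mp hv).2
              set F2 : Finset ↥J := (Tv.filter (fun v => v ∈ J)).attach.map
                ⟨fun v => (⟨v.1, hsub v.1 v.2⟩ : ↥J),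
                 fun a b hab => Subtype.ext (show (a : ℝ) = (b : ℝ) from congrArg Subtype.val hab)⟩ with hF2
              calc ∑ v ∈ Tv.filter (fun v => v ∈ J), pVar p y (lm v) (τ v)
                  = ∑ t ∈ F2, pVar p y (lm (t:ℝ)) (τ (t:ℝ)) := by
                    rw [hF2, Finset.sum_map]
                    exact (Finset.sum_attach _ _).symm
                _ ≤ SJ := ENNReal.sum_le_tsum F2
      calc (∑ j ∈ notG, inc j) + (∑ j ∈ G, A j) + (∑ j ∈ G, B j)
          = ∑ v ∈ Tv, ((∑ j ∈ notG.filter (fun j => tj j = v), inc j)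
            + (∑ j ∈ G.filter (fun j => tj j = v), A j)
            + (∑ j ∈ G.filter (fun j => tj (j+1) = v), B j)) := by
            rw [Finset.sum_add_distrib, Finset.sum_add_distrib, ← e1, ← e2, ← e3]
        _ ≤ SJ := hsum_le
    calc psum p y s n = (∑ j ∈ G, inc j) + ∑ j ∈ notG, inc j := hsplit
      _ ≤ C3 * ((∑ j ∈ G, A j) + (∑ j ∈ G, M j) + (∑ j ∈ G, B j)) + C3 * ∑ j ∈ notG, inc j := by
          refine add_le_add hGsum ?_
          calc ∑ j ∈ notG, inc j = 1 * ∑ j ∈ notG, inc j := (one_mul _).symm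
            _ ≤ C3 * ∑ j ∈ notG, inc j := mul_le_mul_left hC3one _
      _ = C3 * ((∑ j ∈ G, M j) + ((∑ j ∈ notG, inc j) + (∑ j ∈ G, A j) + (∑ j ∈ G, B j))) := by
          ring
      _ ≤ C3 * (X + SJ) := by
          exact mul_le_mul_right (add_le_add hMX hK) _
      _ = C3 * X + C3 * SJ := mul_add _ _ _
  refine le_trans upper ?_
  have hC3eq : C3 = ENNReal.ofReal ((3:ℝ) ^ (p - 1)) := by
    rw [← ENNReal.ofReal_rpow_of_pos (by norm_num : (0:ℝ) < 3)]
    norm_num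
    exact hC3
  have h1 : C3 ≤ ENNReal.ofReal (1 + (2 : ℝ) ^ p + (3 : ℝ) ^ (p - 1)) := by
    rw [hC3eq]
    refine ENNReal.ofReal_le_ofReal ?_
    have : (0:ℝ) ≤ (2:ℝ) ^ p := Real.rpow_nonneg (by norm_num) p
    linarith
  have h2 : C3 ≤ ENNReal.ofReal ((1 + (2 : ℝ) ^ p + (3 : ℝ) ^ (p - 1)) + (3 : ℝ) ^ (p - 1)) := by
    rw [hC3eq]
    refine ENNReal.ofReal_le_ofReal ?_
    have h2p : (0:ℝ) ≤ (2:ℝ) ^ p := Real.rpow_nonneg (by norm_num) p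
    have h3p : (0:ℝ) ≤ (3:ℝ) ^ (p-1) := Real.rpow_nonneg (by norm_num) (p-1)
    linarith
  exact add_le_add (mul_le_mul_left h1 _) (mul_le_mul_left h2 _)
end

section
/- Let (E,d) be a metric space, p ≥ 1, and set R = 1 + 2^p + 3^{p−1}. Let T, S > 0, let τ : [0,T] → [0,S] be nondecreasing and right-continuous with τ(0) = 0 and τ(T) = S, let y : [0,S] → E be continuous, and define x := y ∘ τ : [0,T] → E. Suppose η ≥ 1 is a constant such that for every jump time t of τ (i.e. t ∈ (0,T] with τ(t−) < τ(t)) the restriction γ_t of y to [τ(t−), τ(t)] satisfies ‖γ_t‖_{p-var;[τ(t−),τ(t)]} ≤ η · d(y(τ(t−)), y(τ(t))). Then ‖y‖_{p-var;[0,S]}^p ≤ (R + η^p (R + 3^{p−1})) · ‖x‖_{p-var;[0,T]}^p. -/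
open scoped ENNReal

/-- The `p`-variation (norm) itself, i.e. the `1/p`-th power of `pVar`. -/
noncomputable def pVarNorm {E : Type*} [PseudoMetricSpace E] (p : ℝ) (x : ℝ → E) (a b : ℝ) :
    ℝ≥0∞ :=
  pVar p x a b ^ (1 / p)

namespace PV

variable {E : Type*} [PseudoMetricSpace E] {p : ℝ}

/-- ℕ-indexed partitions of `[a,b]`. -/
def Ptn (a b : ℝ) : Type :=
  {q : ℕ × (ℕ → ℝ) // (∀ ⦃i j : ℕ⦄, i ≤ j → j ≤ q.1 → q.2 i ≤ q.2 j) ∧ q.2 0 = a ∧ q.2 q.1 = b}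

lemma Ptn.nonempty {a b : ℝ} (hab : a ≤ b) : Nonempty (Ptn a b) := by
  refine ⟨⟨(1, fun m => if m = 0 then a else b), ?_, by simp, by simp⟩⟩
  intro i j hij _
  by_cases hi : i = 0 <;> by_cases hj : j = 0 <;> simp [hi, hj, hab, le_refl] <;> omega

noncomputable def psum (p : ℝ) (f : ℝ → E) {a b : ℝ} (q : Ptn a b) : ℝ≥0∞ :=
  ∑ i ∈ Finset.range q.1.1, edist (f (q.1.2 i)) (f (q.1.2 (i + 1))) ^ p

lemma nat_le (p : ℝ) (f : ℝ → E) {a b : ℝ} (k : ℕ) (t : ℕ → ℝ)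
    (hm : ∀ ⦃i j : ℕ⦄, i ≤ j → j ≤ k → t i ≤ t j) (h0 : t 0 = a) (hk : t k = b) :
    (∑ i ∈ Finset.range k, edist (f (t i)) (f (t (i + 1))) ^ p) ≤ pVar p f a b := by
  have hmono : Monotone (fun i : Fin (k + 1) => t i.val) := by
    intro i j hij
    exact hm (by exact_mod_cast hij) (Nat.lt_succ_iff.mp j.isLt)
  have hsum : (∑ i : Fin k, edist (f (t (i.castSucc).val)) (f (t i.succ.val)) ^ p)
      = ∑ i ∈ Finset.range k, edist (f (t i)) (f (t (i + 1))) ^ p := by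
    simp only [Fin.coe_castSucc, Fin.val_succ]
    exact Fin.sum_univ_eq_sum_range (fun i => edist (f (t i)) (f (t (i + 1))) ^ p) k
  calc (∑ i ∈ Finset.range k, edist (f (t i)) (f (t (i + 1))) ^ p)
      = ∑ i : Fin k, edist (f ((fun i : Fin (k+1) => t i.val) i.castSucc))
          (f ((fun i : Fin (k+1) => t i.val) i.succ)) ^ p := hsum.symm
    _ ≤ pVar p f a b := by
        apply le_iSup_of_le k
        apply le_iSup_of_le (fun i : Fin (k+1) => t i.val)
        apply le_iSup_of_le hmono
        apply le_iSup_of_le (by simpa using h0)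
        exact le_iSup_of_le (by simpa [Fin.last] using hk) le_rfl

lemma pvar_eq (f : ℝ → E) {a b : ℝ} (hab : a ≤ b) :
    pVar p f a b = ⨆ q : Ptn a b, psum p f q := by
  refine le_antisymm ?_ (iSup_le fun q => ?_)
  · refine iSup_le fun n => iSup_le fun t => iSup_le fun hmono => iSup_le fun h0 =>
      iSup_le fun h1 => ?_
    have hq : ∀ ⦃i j : ℕ⦄, i ≤ j → j ≤ n → t ⟨min i n, by omega⟩ ≤ t ⟨min j n, by omega⟩ := by
      intro i j hij _
      exact hmono (by simp [Fin.le_def]; omega)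
    refine le_trans (le_of_eq ?_) (le_iSup _
      (⟨(n, fun m => t ⟨min m n, by omega⟩), fun i j hij hj => hq hij hj,
        by simpa using h0, by simpa [Fin.last] using h1⟩ : Ptn a b))
    unfold psum
    rw [← Fin.sum_univ_eq_sum_range
        (fun m => edist (f (t ⟨min m n, by omega⟩)) (f (t ⟨min (m+1) n, by omega⟩)) ^ p) n]
    apply Finset.sum_congr rfl
    intro i _
    have h1 : (⟨min (i.val) n, by omega⟩ : Fin (n+1)) = i.castSucc := by
      apply Fin.ext; simp [Nat.min_eq_left (Nat.le_of_lt i.isLt)]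
    have h2 : (⟨min (i.val+1) n, by omega⟩ : Fin (n+1)) = i.succ := by
      apply Fin.ext; simp [Nat.min_eq_left i.isLt]
    rw [h1, h2]
  · exact nat_le p f q.1.1 q.1.2 q.2.1 q.2.2.1 q.2.2.2

lemma edist_le (p : ℝ) (f : ℝ → E) {a u v b : ℝ} (hau : a ≤ u) (huv : u ≤ v) (hvb : v ≤ b) :
    edist (f u) (f v) ^ p ≤ pVar p f a b := by
  have := nat_le p f (a := a) (b := b) 3 (fun m => if m = 0 then a else if m = 1 then u else if m = 2 then v else b)
    ?_ (by simp) (by simp)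
  · refine le_trans ?_ this
    rw [Finset.sum_range_succ, Finset.sum_range_succ, Finset.sum_range_succ]
    norm_num
    exact le_trans le_add_self le_self_add
  · intro i j hij hj3
    have hi3 : i ≤ 3 := le_trans hij hj3
    interval_cases i <;> interval_cases j <;> simp_all <;> linarith

lemma pvar_self (hp0 : 0 < p) (f : ℝ → E) (a : ℝ) : pVar p f a a = 0 := by
  rw [pvar_eq f (le_refl a)]
  refine le_antisymm (iSup_le fun q => ?_) zero_le
  simp only [psum]
  refine le_of_eq (Finset.sum_eq_zero fun i hi => ?_)
  have hi' := Finset.mem_range.mp hi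
  have hconst : ∀ m, m ≤ q.1.1 → q.1.2 m = a := by
    intro m hm
    have h1 := q.2.1 hm le_rfl
    rw [q.2.2.2] at h1
    have h2 := q.2.1 (Nat.zero_le m) hm
    rw [q.2.2.1] at h2
    linarith
  rw [hconst i (by omega), hconst (i+1) (by omega), edist_self,
    ENNReal.zero_rpow_of_pos hp0]

lemma prepend (p : ℝ) (f : ℝ → E) {a u b : ℝ} (hau : a ≤ u) (hub : u ≤ b) :
    edist (f a) (f u) ^ p + pVar p f u b ≤ pVar p f a b := by
  rw [pvar_eq f hub]
  haveI := Ptn.nonempty hub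
  rw [ENNReal.add_iSup]
  refine iSup_le fun q => ?_
  have key := nat_le p f (a := a) (b := b) (q.1.1 + 1) (fun m => if m = 0 then a else q.1.2 (m - 1)) ?_ (by simp)
    (by simp [q.2.2.2])
  · refine le_trans (le_of_eq ?_) key
    rw [Finset.sum_range_succ']
    simp only [show ∀ m : ℕ, (if m + 1 = 0 then a else q.1.2 (m + 1 - 1)) = q.1.2 m from
      fun m => by simp, if_pos rfl]
    rw [q.2.2.1]
    exact add_comm _ _
  · intro i j hij hj
    by_cases hi : i = 0
    · subst hi
      by_cases hj0 : j = 0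
      · simp [hj0]
      · simp only [if_pos rfl, if_neg hj0]
        have h := q.2.1 (Nat.zero_le (j-1)) (by omega : j - 1 ≤ q.1.1)
        rw [q.2.2.1] at h
        exact le_trans hau h
    · have hj0 : j ≠ 0 := by omega
      simp only [if_neg hi, if_neg hj0]
      exact q.2.1 (by omega) (by omega)

lemma append2 (p : ℝ) (f : ℝ → E) {a b u v : ℝ} (hab : a ≤ b) (hbu : b ≤ u) (huv : u ≤ v) :
    pVar p f a b + edist (f u) (f v) ^ p ≤ pVar p f a v := by
  rw [pvar_eq f hab]
  haveI := Ptn.nonempty hab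
  rw [ENNReal.iSup_add]
  refine iSup_le fun q => ?_
  set k := q.1.1 with hk
  have key := nat_le p f (a := a) (b := v) (k + 2)
    (fun m => if m ≤ k then q.1.2 m else if m = k + 1 then u else v) ?_
    (by simp [q.2.2.1])
    (by have h1 : ¬ (k + 2 ≤ k) := by omega
        have h2 : ¬ (k + 2 = k + 1) := by omega
        simp [h1, h2])
  · refine le_trans ?_ key
    rw [Finset.sum_range_succ, Finset.sum_range_succ]
    have h1 : ∀ m, m < k → (edist (f (if m ≤ k then q.1.2 m else if m = k + 1 then u else v))
        (f (if m + 1 ≤ k then q.1.2 (m+1) else if m + 1 = k + 1 then u else v)) ^ p)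
        = edist (f (q.1.2 m)) (f (q.1.2 (m+1))) ^ p := by
      intro m hm
      rw [if_pos (by omega), if_pos (by omega)]
    have h2 : (∑ i ∈ Finset.range k, edist (f (if i ≤ k then q.1.2 i else if i = k + 1 then u else v))
        (f (if i + 1 ≤ k then q.1.2 (i+1) else if i + 1 = k + 1 then u else v)) ^ p) = psum p f q := by
      rw [psum]
      exact Finset.sum_congr rfl fun i hi => h1 i (Finset.mem_range.mp hi)
    rw [h2]
    simp only [if_pos (le_refl k), if_neg (by omega : ¬ k + 1 ≤ k), if_pos rfl,
      if_neg (by omega : ¬ k + 1 + 1 ≤ k), if_neg (by omega : ¬ k + 2 = k + 1),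
      if_neg (by omega : ¬ k + 2 ≤ k)]
    exact add_le_add le_self_add le_rfl
  · intro i j hij hj
    have hq := q.2.1
    have hqb := q.2.2.2
    by_cases hi : i ≤ k <;> by_cases hjk : j ≤ k
    · simp only [if_pos hi, if_pos hjk]
      exact hq hij hjk
    · by_cases hj1 : j = k + 1
      · simp only [if_pos hi, if_neg hjk, if_pos hj1]
        have h := hq hi (le_refl k)
        rw [hqb] at h
        exact le_trans h hbu
      · simp only [if_pos hi, if_neg hjk, if_neg hj1]
        have h := hq hi (le_refl k)
        rw [hqb] at h
        exact le_trans h (le_trans hbu huv)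
    · omega
    · by_cases hi1 : i = k + 1
      · by_cases hj1 : j = k + 1
        · simp [hi1, hj1]
        · simp only [if_neg hi, if_pos hi1, if_neg hjk, if_neg hj1]; exact huv
      · have hj1 : j ≠ k + 1 := by omega
        simp [if_neg hi, if_neg hi1, if_neg hjk, if_neg hj1]

lemma mono_left (p : ℝ) (f : ℝ → E) {a a' b : ℝ} (h : a ≤ a') (h2 : a' ≤ b) :
    pVar p f a' b ≤ pVar p f a b :=
  le_trans le_add_self (prepend p f h h2)

lemma mono_right (hp0 : 0 < p) (f : ℝ → E) {a b c : ℝ} (hab : a ≤ b) (hbc : b ≤ c) :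
    pVar p f a b ≤ pVar p f a c := by
  have := append2 p f hab hbc (le_refl c)
  simpa [edist_self, ENNReal.zero_rpow_of_pos hp0] using this


lemma three_ineq {p : ℝ} (hp : 1 ≤ p) (e1 e2 e3 : ℝ≥0∞) :
    (e1 + e2 + e3) ^ p ≤ (3 : ℝ≥0∞) ^ (p - 1) * (e1 ^ p + e2 ^ p + e3 ^ p) := by
  have hp0 : (0:ℝ) ≤ p := le_trans zero_le_one hp
  have h3 : (3 : ℝ≥0∞) ≠ 0 := by norm_num
  have h3' : (3 : ℝ≥0∞) ≠ ⊤ := by norm_num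
  have hsum1 : ∑ _i : Fin 3, (3⁻¹ : ℝ≥0∞) = 1 := by
    rw [Fin.sum_univ_three, show (3⁻¹ + 3⁻¹ + 3⁻¹ : ℝ≥0∞) = 3 * 3⁻¹ by ring]
    exact ENNReal.mul_inv_cancel h3 h3'
  have key := ENNReal.rpow_arith_mean_le_arith_mean_rpow (ι := Fin 3) Finset.univ
    (fun _ => 3⁻¹) ![e1, e2, e3] hsum1 hp
  simp only [Fin.sum_univ_three, Matrix.cons_val_zero, Matrix.cons_val_one, Matrix.head_cons,
    Matrix.cons_val_two, Matrix.tail_cons] at key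
  have hE : (3:ℝ≥0∞) ^ (p-1) * (e1^p+e2^p+e3^p)
      = 3^p * (3⁻¹*e1^p + 3⁻¹*e2^p + 3⁻¹*e3^p) := by
    rw [sub_eq_add_neg, ENNReal.rpow_add _ _ h3 h3', ENNReal.rpow_neg_one]; ring
  rw [hE]
  calc (e1+e2+e3)^p = (3 * (3⁻¹*e1 + 3⁻¹*e2 + 3⁻¹*e3))^p := by
        rw [show (3:ℝ≥0∞) * (3⁻¹*e1 + 3⁻¹*e2 + 3⁻¹*e3)
            = (3*3⁻¹)*e1 + (3*3⁻¹)*e2 + (3*3⁻¹)*e3 by ring,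
          ENNReal.mul_inv_cancel h3 h3', one_mul, one_mul, one_mul]
    _ = 3^p * (3⁻¹*e1 + 3⁻¹*e2 + 3⁻¹*e3)^p := ENNReal.mul_rpow_of_nonneg _ _ hp0
    _ ≤ 3^p * (3⁻¹*e1^p + 3⁻¹*e2^p + 3⁻¹*e3^p) := mul_le_mul_right key _


end PV

/-- Second part of Lemma 2.14 of the paper.  Let `τ : [0,T] → [0,S]` be nondecreasing,
right-continuous, with `τ 0 = 0`, `τ T = S`, let `y : [0,S] → E` be continuous, and
`x := y ∘ τ`.  If `η ≥ 1` is such that for every jump time `t` of `τ` (with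
`τ(t−) = sSup (τ '' [0,t))`) one has `‖y|_{[τ(t−),τ(t)]}‖_{p-var} ≤ η·d(y(τ(t−)), y(τ(t)))`,
then, with `R = 1 + 2^p + 3^(p-1)`, `‖y‖ₚ^p ≤ (R + η^p (R + 3^(p-1))) ‖x‖ₚ^p`. -/
theorem pvar_interpolated_bound
    {E : Type*} [MetricSpace E] (p T S η : ℝ) (hp : 1 ≤ p) (hT : 0 < T) (hS : 0 < S)
    (hη : 1 ≤ η)
    (τ : ℝ → ℝ) (y : ℝ → E)
    (hτmono : MonotoneOn τ (Set.Icc 0 T))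
    (hτrc : ∀ t ∈ Set.Ico 0 T, Filter.Tendsto τ (nhdsWithin t (Set.Ioi t)) (nhds (τ t)))
    (hτ0 : τ 0 = 0) (hτT : τ T = S)
    (hy : ContinuousOn y (Set.Icc 0 S))
    (hjump : ∀ t ∈ Set.Ioc (0 : ℝ) T, sSup (τ '' Set.Ico 0 t) < τ t →
      pVarNorm p y (sSup (τ '' Set.Ico 0 t)) (τ t)
        ≤ ENNReal.ofReal (η * dist (y (sSup (τ '' Set.Ico 0 t))) (y (τ t)))) :
    pVar p y 0 S
      ≤ ENNReal.ofReal ((1 + (2 : ℝ) ^ p + (3 : ℝ) ^ (p - 1))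
            + η ^ p * ((1 + (2 : ℝ) ^ p + (3 : ℝ) ^ (p - 1)) + (3 : ℝ) ^ (p - 1))) *
          pVar p (y ∘ τ) 0 T := by
  classical
  have hp0 : (0:ℝ) < p := lt_of_lt_of_le one_pos hp
  set V := pVar p (y ∘ τ) 0 T with hVdef
  have hτ_mem : ∀ u, u ∈ Set.Icc (0:ℝ) T → τ u ∈ Set.Icc (0:ℝ) S := by
    intro u hu
    constructor
    · rw [← hτ0]; exact hτmono ⟨le_rfl, hT.le⟩ hu hu.1
    · rw [← hτT]; exact hτmono hu ⟨hT.le, le_rfl⟩ hu.2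
  set A : ℝ → Set ℝ := fun r => {u | u ∈ Set.Icc 0 T ∧ r ≤ τ u} with hAdef
  set G : ℝ → ℝ := fun r => sInf (A r) with hGdef
  have hAne : ∀ r, r ≤ S → (A r).Nonempty := by
    intro r hr
    exact ⟨T, ⟨⟨hT.le, le_rfl⟩, by rw [hτT]; exact hr⟩⟩
  have hAbdd : ∀ r, BddBelow (A r) := fun r => ⟨0, fun u hu => hu.1.1⟩
  have hGmem : ∀ r, r ≤ S → G r ∈ Set.Icc (0:ℝ) T := by
    intro r hr
    exact ⟨le_csInf (hAne r hr) (fun u hu => hu.1.1),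
      csInf_le (hAbdd r) ⟨⟨hT.le, le_rfl⟩, by rw [hτT]; exact hr⟩⟩
  have hGmono : ∀ r r', r ≤ r' → r' ≤ S → G r ≤ G r' := by
    intro r r' hrr hr'
    exact csInf_le_csInf (hAbdd r) (hAne r' hr') (fun u hu => ⟨hu.1, le_trans hrr hu.2⟩)
  have hτG : ∀ r, r ∈ Set.Icc (0:ℝ) S → r ≤ τ (G r) := by
    intro r hr
    rcases eq_or_lt_of_le (hGmem r hr.2).2 with hGT | hGT
    · rw [hGT, hτT]; exact hr.2
    · refine ge_of_tendsto (hτrc (G r) ⟨(hGmem r hr.2).1, hGT⟩) ?_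
      filter_upwards [Ioo_mem_nhdsGT_of_mem (Set.left_mem_Ico.mpr hGT)] with u hu
      obtain ⟨a, ha, hau⟩ := exists_lt_of_csInf_lt (hAne r hr.2) hu.1
      calc r ≤ τ a := ha.2
        _ ≤ τ u := hτmono ha.1 ⟨le_trans (hGmem r hr.2).1 hu.1.le, hu.2.le⟩ hau.le
  set L : ℝ → ℝ := fun r => sSup (τ '' Set.Ico 0 (G r)) with hLdef
  have hLbdd : ∀ r, r ≤ S → BddAbove (τ '' Set.Ico 0 (G r)) := by
    intro r hr
    refine ⟨S, ?_⟩
    rintro z ⟨u, hu, rfl⟩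
    exact (hτ_mem u ⟨hu.1, le_trans hu.2.le (hGmem r hr).2⟩).2
  have hLr : ∀ r, r ∈ Set.Icc (0:ℝ) S → L r ≤ r := by
    intro r hr
    rcases eq_or_lt_of_le (hGmem r hr.2).1 with h0 | h0
    · have : L r = 0 := by
        simp only [hLdef]
        rw [← h0, Set.Ico_self, Set.image_empty, Real.sSup_empty]
      rw [this]; exact hr.1
    · refine csSup_le ⟨τ 0, ⟨0, ⟨le_rfl, h0⟩, rfl⟩⟩ ?_
      rintro z ⟨u, hu, rfl⟩
      have hnotA : u ∉ A r := notMem_of_lt_csInf hu.2 (hAbdd r)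
      have huT : u ∈ Set.Icc (0:ℝ) T := ⟨hu.1, le_trans hu.2.le (hGmem r hr.2).2⟩
      by_contra hcon
      exact hnotA ⟨huT, (not_le.mp hcon).le⟩
  have hLmem : ∀ r, r ∈ Set.Icc (0:ℝ) S → L r ∈ Set.Icc (0:ℝ) S := by
    intro r hr
    rcases eq_or_lt_of_le (hGmem r hr.2).1 with h0 | h0
    · have : L r = 0 := by
        simp only [hLdef]
        rw [← h0, Set.Ico_self, Set.image_empty, Real.sSup_empty]
      rw [this]; exact ⟨le_rfl, hS.le⟩
    · constructor
      · rw [← hτ0]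
        exact le_csSup (hLbdd r hr.2) ⟨0, ⟨le_rfl, h0⟩, rfl⟩
      · refine csSup_le ⟨τ 0, ⟨0, ⟨le_rfl, h0⟩, rfl⟩⟩ ?_
        rintro z ⟨u, hu, rfl⟩
        exact (hτ_mem u ⟨hu.1, le_trans hu.2.le (hGmem r hr.2).2⟩).2
  have hLA : ∀ r, r ∈ Set.Icc (0:ℝ) S → L r ≤ τ (G r) :=
    fun r hr => le_trans (hLr r hr) (hτG r hr)
  set Jmp : ℝ → ℝ≥0∞ := fun t => edist (y (sSup (τ '' Set.Ico 0 t))) (y (τ t)) ^ p with hJmpdef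
  have hJGr : ∀ r, Jmp (G r) = edist (y (L r)) (y (τ (G r))) ^ p := fun r => rfl
  have hB5 : ∀ r, r ∈ Set.Icc (0:ℝ) S →
      pVar p y (L r) (τ (G r)) ≤ ENNReal.ofReal η ^ p * Jmp (G r) := by
    intro r hr
    rcases eq_or_lt_of_le (hLA r hr) with heq | hlt
    · rw [← heq, PV.pvar_self hp0]
      exact zero_le
    · have hGpos : 0 < G r := by
        rcases eq_or_lt_of_le (hGmem r hr.2).1 with h0 | h0
        · exfalso
          have hL0 : L r = 0 := by
            simp only [hLdef]
            rw [← h0, Set.Ico_self, Set.image_empty, Real.sSup_empty]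
          have hτ0' : τ (G r) = 0 := by rw [← h0, hτ0]
          rw [hL0, hτ0'] at hlt
          exact lt_irrefl 0 hlt
        · exact h0
      have hj := hjump (G r) ⟨hGpos, (hGmem r hr.2).2⟩ hlt
      have hpv : pVar p y (L r) (τ (G r)) = (pVarNorm p y (L r) (τ (G r))) ^ p := by
        simp only [pVarNorm]
        rw [one_div, ENNReal.rpow_inv_rpow hp0.ne']
      rw [hpv, hJGr]
      calc (pVarNorm p y (L r) (τ (G r))) ^ p
          ≤ (ENNReal.ofReal (η * dist (y (L r)) (y (τ (G r))))) ^ p :=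
            ENNReal.rpow_le_rpow hj hp0.le
        _ = ENNReal.ofReal η ^ p * edist (y (L r)) (y (τ (G r))) ^ p := by
            rw [ENNReal.ofReal_mul (by linarith : (0:ℝ) ≤ η),
              ENNReal.mul_rpow_of_nonneg _ _ hp0.le, ← edist_dist]
  have hC1 : ∀ r, r ∈ Set.Icc (0:ℝ) T → 0 < r → ∀ lb, 0 ≤ lb → lb < r → ∀ ε : ℝ, 0 < ε →
      ∃ u, lb ≤ u ∧ u ≤ r ∧ 0 ≤ u ∧
        Jmp r ≤ edist ((y ∘ τ) u) ((y ∘ τ) r) ^ p + ENNReal.ofReal ε := by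
    intro r hr hrpos lb hlb0 hlbr ε hε
    set Λ := sSup (τ '' Set.Ico 0 r) with hΛdef
    have hIne : (τ '' Set.Ico 0 r).Nonempty := ⟨τ 0, ⟨0, ⟨le_rfl, hrpos⟩, rfl⟩⟩
    have hIbdd : BddAbove (τ '' Set.Ico 0 r) := by
      refine ⟨S, ?_⟩
      rintro z ⟨u, hu, rfl⟩
      exact (hτ_mem u ⟨hu.1, le_trans hu.2.le hr.2⟩).2
    have hΛmem : Λ ∈ Set.Icc (0:ℝ) S := by
      constructor
      · rw [← hτ0]; exact le_csSup hIbdd ⟨0, ⟨le_rfl, hrpos⟩, rfl⟩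
      · refine csSup_le hIne ?_
        rintro z ⟨u, hu, rfl⟩
        exact (hτ_mem u ⟨hu.1, le_trans hu.2.le hr.2⟩).2
    set d0 := dist (y Λ) (y (τ r)) with hd0def
    rcases le_or_gt d0 0 with hd00 | hd0pos
    · refine ⟨r, hlbr.le, le_rfl, le_trans hlb0 hlbr.le, ?_⟩
      have hz : Jmp r = 0 := by
        simp only [hJmpdef]
        rw [edist_dist, ← hΛdef, ← hd0def, le_antisymm hd00 dist_nonneg,
          ENNReal.ofReal_zero, ENNReal.zero_rpow_of_pos hp0]
      rw [hz]; exact zero_le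
    · have hcont : ContinuousAt (fun z : ℝ => z ^ p) d0 :=
        Real.continuousAt_rpow_const d0 p (Or.inr hp0.le)
      obtain ⟨δ', hδ'pos, hδ'⟩ := Metric.continuousAt_iff.mp hcont ε hε
      set δ2 := min (δ'/2) (d0/2) with hδ2def
      have hδ2pos : 0 < δ2 := lt_min (by linarith) (by linarith)
      have hδ2d0 : δ2 < d0 := lt_of_le_of_lt (min_le_right _ _) (by linarith)
      have hδ2δ' : δ2 < δ' := lt_of_le_of_lt (min_le_left _ _) (by linarith)
      have hpow : d0 ^ p ≤ (d0 - δ2) ^ p + ε := by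
        have hdist : dist (d0 - δ2) d0 < δ' := by
          rw [Real.dist_eq]
          have : |d0 - δ2 - d0| = δ2 := by
            rw [show d0 - δ2 - d0 = -δ2 by ring, abs_neg, abs_of_pos hδ2pos]
          rw [this]; exact hδ2δ'
        have h := hδ' hdist
        rw [Real.dist_eq, abs_lt] at h
        linarith [h.1]
      obtain ⟨δ1, hδ1pos, hδ1⟩ := Metric.continuousWithinAt_iff.mp (hy Λ hΛmem) δ2 hδ2pos
      obtain ⟨z, hzmem, hzgt⟩ := exists_lt_of_lt_csSup hIne (by linarith : Λ - δ1 < Λ)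
      obtain ⟨w, hw, rfl⟩ := hzmem
      refine ⟨max w lb, le_max_right _ _, ?_, ?_, ?_⟩
      · exact (max_lt hw.2 hlbr).le
      · exact le_trans hlb0 (le_max_right _ _)
      have hur : max w lb < r := max_lt hw.2 hlbr
      have hu0 : (0:ℝ) ≤ max w lb := le_trans hlb0 (le_max_right _ _)
      have huT : max w lb ∈ Set.Icc (0:ℝ) T := ⟨hu0, le_trans hur.le hr.2⟩
      have hτu_le : τ (max w lb) ≤ Λ := le_csSup hIbdd ⟨max w lb, ⟨hu0, hur⟩, rfl⟩
      have hτu_ge : Λ - δ1 < τ (max w lb) :=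
        lt_of_lt_of_le hzgt (hτmono ⟨hw.1, le_trans hw.2.le hr.2⟩ huT (le_max_left _ _))
      have hτu_mem : τ (max w lb) ∈ Set.Icc (0:ℝ) S := hτ_mem _ huT
      have hclose : dist (τ (max w lb)) Λ < δ1 := by
        rw [Real.dist_eq, abs_lt]; constructor <;> linarith
      have hyd : dist (y (τ (max w lb))) (y Λ) < δ2 := hδ1 hτu_mem hclose
      have htri : d0 - δ2 ≤ dist (y (τ (max w lb))) (y (τ r)) := by
        have h4 := dist_triangle (y Λ) (y (τ (max w lb))) (y (τ r))
        have h5 : dist (y Λ) (y (τ (max w lb))) < δ2 := by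
          rw [dist_comm]; exact hyd
        rw [← hd0def] at h4
        linarith
      have h1 : Jmp r = ENNReal.ofReal (d0 ^ p) := by
        simp only [hJmpdef]
        rw [edist_dist, ← hΛdef, ← hd0def, ENNReal.ofReal_rpow_of_pos hd0pos]
      have h2 : edist ((y ∘ τ) (max w lb)) ((y ∘ τ) r) ^ p
          = ENNReal.ofReal (dist (y (τ (max w lb))) (y (τ r)) ^ p) := by
        rw [show (y ∘ τ) (max w lb) = y (τ (max w lb)) from rfl, show (y ∘ τ) r = y (τ r) from rfl,
          edist_dist, ENNReal.ofReal_rpow_of_nonneg dist_nonneg hp0.le]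
      rw [h1, h2, ← ENNReal.ofReal_add (by positivity) hε.le]
      apply ENNReal.ofReal_le_ofReal
      have hmono2 : (d0 - δ2) ^ p ≤ dist (y (τ (max w lb))) (y (τ r)) ^ p :=
        Real.rpow_le_rpow (by linarith) htri hp0.le
      linarith
  have hJF : ∀ F : Finset ℝ, (∀ t ∈ F, t ∈ Set.Icc (0:ℝ) T) → (∑ t ∈ F, Jmp t) ≤ V := by
    intro F hF
    rcases F.eq_empty_or_nonempty with rfl | hFne
    · simp
    refine ENNReal.le_of_forall_pos_le_add ?_
    intro ε hε hVlt
    have hcard : 0 < (F.card : ℝ) := by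
      exact_mod_cast Finset.card_pos.mpr hFne
    set εr : ℝ := ε / F.card with hεrdef
    have hεrpos : 0 < εr := div_pos (by exact_mod_cast hε) hcard
    have hJ0 : Jmp 0 = 0 := by
      simp only [hJmpdef]
      rw [Set.Ico_self, Set.image_empty, Real.sSup_empty, hτ0, edist_self,
        ENNReal.zero_rpow_of_pos hp0]
    have claim : ∀ F' : Finset ℝ, (∀ t ∈ F', t ∈ Set.Icc (0:ℝ) T) → ∀ hne : F'.Nonempty,
        (∑ t ∈ F', Jmp t) ≤ pVar p (y ∘ τ) 0 (F'.max' hne) + F'.card * ENNReal.ofReal εr := by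
      intro F'
      induction F' using Finset.induction_on_max with
      | empty =>
        intro _ hne
        exact absurd hne (by simp)
      | insert a s hlt ih =>
        intro hmem hne
        have hanotmem : a ∉ s := fun ha => lt_irrefl a (hlt a ha)
        have hamem : a ∈ Set.Icc (0:ℝ) T := hmem a (Finset.mem_insert_self a s)
        rcases s.eq_empty_or_nonempty with rfl | hsne
        · rw [Finset.sum_insert (Finset.notMem_empty a), Finset.sum_empty, add_zero]
          have hmax : (insert a (∅ : Finset ℝ)).max' hne = a := by
            simp [Finset.max']
          rw [hmax]
          rcases eq_or_lt_of_le hamem.1 with h0 | h0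
          · rw [← h0, hJ0]
            exact zero_le
          · obtain ⟨u, hu1, hu2, hu3, hu4⟩ := hC1 a hamem h0 0 le_rfl h0 εr hεrpos
            refine le_trans hu4 ?_
            have := PV.edist_le p (y ∘ τ) (a := 0) (b := a) hu3 hu2 le_rfl
            simp only [Finset.card_insert_of_notMem (Finset.notMem_empty a),
              Finset.card_empty, zero_add, Nat.cast_one, one_mul]
            exact add_le_add this le_rfl
        · have hmaxs := s.max'_mem hsne
          have hmax : (insert a s).max' hne = a := by
            rw [show (insert a s).max' hne = (insert a s).max' (s.insert_nonempty a) from rfl,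
              Finset.max'_insert a s hsne, max_eq_left (le_of_lt (hlt _ hmaxs))]
          have hsmem : ∀ t ∈ s, t ∈ Set.Icc (0:ℝ) T :=
            fun t ht => hmem t (Finset.mem_insert_of_mem ht)
          have hIH := ih hsmem hsne
          have hmaxmem := hsmem _ hmaxs
          have hapos : 0 < a := lt_of_le_of_lt hmaxmem.1 (hlt _ hmaxs)
          obtain ⟨u, hu1, hu2, hu3, hu4⟩ :=
            hC1 a hamem hapos (s.max' hsne) hmaxmem.1 (hlt _ hmaxs) εr hεrpos
          rw [Finset.sum_insert hanotmem, hmax, Finset.card_insert_of_notMem hanotmem]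
          push_cast
          have hstep : pVar p (y ∘ τ) 0 (s.max' hsne) + edist ((y ∘ τ) u) ((y ∘ τ) a) ^ p
              ≤ pVar p (y ∘ τ) 0 a := PV.append2 p (y ∘ τ) hmaxmem.1 hu1 hu2
          calc Jmp a + ∑ t ∈ s, Jmp t
              ≤ (edist ((y ∘ τ) u) ((y ∘ τ) a) ^ p + ENNReal.ofReal εr)
                + (pVar p (y ∘ τ) 0 (s.max' hsne) + s.card * ENNReal.ofReal εr) :=
                add_le_add hu4 hIH
            _ = (pVar p (y ∘ τ) 0 (s.max' hsne) + edist ((y ∘ τ) u) ((y ∘ τ) a) ^ p)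
                + (s.card * ENNReal.ofReal εr + ENNReal.ofReal εr) := by ring
            _ ≤ pVar p (y ∘ τ) 0 a + ((s.card : ℝ≥0∞) + 1) * ENNReal.ofReal εr := by
                refine add_le_add hstep (le_of_eq ?_)
                ring
    have hkey := claim F hF hFne
    refine le_trans hkey ?_
    have hmaxmem := hF _ (F.max'_mem hFne)
    have h1 : pVar p (y ∘ τ) 0 (F.max' hFne) ≤ V :=
      PV.mono_right hp0 _ hmaxmem.1 hmaxmem.2
    have h2 : (F.card : ℝ≥0∞) * ENNReal.ofReal εr = ε := by
      rw [← ENNReal.ofReal_natCast, ← ENNReal.ofReal_mul (Nat.cast_nonneg _), hεrdef,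
        mul_div_cancel₀ _ (ne_of_gt hcard)]
      exact ENNReal.ofReal_coe_nnreal
    exact add_le_add h1 (le_of_eq h2)
  -- main partition bound
  simp only [pVar]
  refine iSup_le fun n => iSup_le fun sF => iSup_le fun hsF => iSup_le fun hsF0 =>
    iSup_le fun hsFn => ?_
  set s : ℕ → ℝ := fun m => sF ⟨min m n, by omega⟩ with hsdef
  have hsmono : Monotone s := by
    intro i j hij
    apply hsF
    simp only [Fin.le_def]
    omega
  have hs0 : s 0 = 0 := by
    have he : (⟨min 0 n, by omega⟩ : Fin (n+1)) = 0 := by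
      apply Fin.ext; simp
    simp only [hsdef, he, hsF0]
  have hsn : s n = S := by
    have he : (⟨min n n, by omega⟩ : Fin (n+1)) = Fin.last n := by
      apply Fin.ext; simp [Fin.last]
    simp only [hsdef, he, hsFn]
  have hsmem : ∀ i, s i ∈ Set.Icc (0:ℝ) S := by
    intro i
    constructor
    · rw [← hs0]; exact hsmono (Nat.zero_le i)
    · rw [← hsFn]
      exact hsF (Fin.le_last _)
  set g : ℕ → ℝ := fun i => G (s i) with hgdef
  have hgmono : ∀ i j : ℕ, i ≤ j → g i ≤ g j :=
    fun i j hij => hGmono _ _ (hsmono hij) (hsmem j).2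
  have hgmem : ∀ i, g i ∈ Set.Icc (0:ℝ) T := fun i => hGmem _ (hsmem i).2
  have hsτg : ∀ i, s i ≤ τ (g i) := fun i => hτG _ (hsmem i)
  have hLs : ∀ i, L (s i) ≤ s i := fun i => hLr _ (hsmem i)
  set w : ℕ → ℝ≥0∞ := fun i => if g i = g (i+1) then edist (y (s i)) (y (s (i+1))) ^ p
    else edist (y (s i)) (y (τ (g i))) ^ p + edist (y (τ (g (i+1)))) (y (s (i+1))) ^ p
    with hwdef
  have hD1 : ∀ k, (∑ i ∈ Finset.range k, w i) + pVar p y (s k) (τ (g k))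
      ≤ ENNReal.ofReal η ^ p * ∑ t ∈ (Finset.range (k+1)).image g, 2 * Jmp t := by
    intro k
    induction k with
    | zero =>
      rw [Finset.range_zero, Finset.sum_empty, zero_add, Finset.range_one,
        Finset.image_singleton, Finset.sum_singleton]
      calc pVar p y (s 0) (τ (g 0)) ≤ pVar p y (L (s 0)) (τ (g 0)) :=
            PV.mono_left p y (hLs 0) (hsτg 0)
        _ ≤ ENNReal.ofReal η ^ p * Jmp (g 0) := hB5 _ (hsmem 0)
        _ ≤ ENNReal.ofReal η ^ p * (2 * Jmp (g 0)) :=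
            mul_le_mul_right (by rw [two_mul]; exact le_self_add) _
    | succ k ihk =>
      rw [Finset.sum_range_succ]
      have hsub : (Finset.range (k+1)).image g ⊆ (Finset.range (k+2)).image g :=
        Finset.image_subset_image (Finset.range_subset_range.mpr (by omega))
      by_cases hgk : g k = g (k+1)
      · have hwk : w k = edist (y (s k)) (y (s (k+1))) ^ p := by
          simp only [hwdef]; rw [if_pos hgk]
        calc (∑ i ∈ Finset.range k, w i) + w k + pVar p y (s (k+1)) (τ (g (k+1)))
            = (∑ i ∈ Finset.range k, w i)
              + (edist (y (s k)) (y (s (k+1))) ^ p + pVar p y (s (k+1)) (τ (g k))) := by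
              rw [hwk, ← hgk, add_assoc]
          _ ≤ (∑ i ∈ Finset.range k, w i) + pVar p y (s k) (τ (g k)) := by
              refine add_le_add_right (PV.prepend p y (hsmono (by omega : k ≤ k + 1)) ?_) _
              rw [hgk]; exact hsτg (k+1)
          _ ≤ ENNReal.ofReal η ^ p * ∑ t ∈ (Finset.range (k+1)).image g, 2 * Jmp t := ihk
          _ ≤ ENNReal.ofReal η ^ p * ∑ t ∈ (Finset.range (k+2)).image g, 2 * Jmp t :=
              mul_le_mul_right (Finset.sum_le_sum_of_subset hsub) _
      · have hglt : g k < g (k+1) := lt_of_le_of_ne (hgmono k (k+1) (by omega)) hgk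
        have hnot : g (k+1) ∉ (Finset.range (k+1)).image g := by
          intro hmem'
          obtain ⟨j, hj, hje⟩ := Finset.mem_image.mp hmem'
          have hj' : j ≤ k := by
            have := Finset.mem_range.mp hj; omega
          exact absurd hje (ne_of_lt (lt_of_le_of_lt (hgmono j k hj') hglt))
        have himg : (Finset.range (k+2)).image g
            = insert (g (k+1)) ((Finset.range (k+1)).image g) := by
          rw [Finset.range_add_one, Finset.image_insert]
        have hwk : w k = edist (y (s k)) (y (τ (g k))) ^ p
            + edist (y (τ (g (k+1)))) (y (s (k+1))) ^ p := by
          simp only [hwdef]; rw [if_neg hgk]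
        have ha : edist (y (s k)) (y (τ (g k))) ^ p ≤ pVar p y (s k) (τ (g k)) :=
          PV.edist_le p y le_rfl (hsτg k) le_rfl
        have hc : edist (y (τ (g (k+1)))) (y (s (k+1))) ^ p
            + pVar p y (s (k+1)) (τ (g (k+1)))
            ≤ 2 * (ENNReal.ofReal η ^ p * Jmp (g (k+1))) := by
          have h1 : edist (y (τ (g (k+1)))) (y (s (k+1))) ^ p
              ≤ pVar p y (s (k+1)) (τ (g (k+1))) := by
            rw [edist_comm]; exact PV.edist_le p y le_rfl (hsτg (k+1)) le_rfl
          have h2 : pVar p y (s (k+1)) (τ (g (k+1)))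
              ≤ ENNReal.ofReal η ^ p * Jmp (g (k+1)) :=
            le_trans (PV.mono_left p y (hLs (k+1)) (hsτg (k+1))) (hB5 _ (hsmem (k+1)))
          calc edist (y (τ (g (k+1)))) (y (s (k+1))) ^ p
                + pVar p y (s (k+1)) (τ (g (k+1)))
              ≤ pVar p y (s (k+1)) (τ (g (k+1))) + pVar p y (s (k+1)) (τ (g (k+1))) :=
                add_le_add h1 le_rfl
            _ ≤ 2 * (ENNReal.ofReal η ^ p * Jmp (g (k+1))) := by
                rw [two_mul]; exact add_le_add h2 h2
        calc (∑ i ∈ Finset.range k, w i) + w k + pVar p y (s (k+1)) (τ (g (k+1)))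
            = ((∑ i ∈ Finset.range k, w i) + edist (y (s k)) (y (τ (g k))) ^ p)
              + (edist (y (τ (g (k+1)))) (y (s (k+1))) ^ p
                + pVar p y (s (k+1)) (τ (g (k+1)))) := by
              rw [hwk]; ring
          _ ≤ ((∑ i ∈ Finset.range k, w i) + pVar p y (s k) (τ (g k)))
              + 2 * (ENNReal.ofReal η ^ p * Jmp (g (k+1))) :=
              add_le_add (add_le_add_right ha _) hc
          _ ≤ ENNReal.ofReal η ^ p * ∑ t ∈ (Finset.range (k+1)).image g, 2 * Jmp t
              + 2 * (ENNReal.ofReal η ^ p * Jmp (g (k+1))) := add_le_add ihk le_rfl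
          _ = ENNReal.ofReal η ^ p * ∑ t ∈ (Finset.range (k+2)).image g, 2 * Jmp t := by
              rw [himg, Finset.sum_insert hnot]; ring
  have hD1' : (∑ i ∈ Finset.range n, w i)
      ≤ ENNReal.ofReal η ^ p * (2 * ∑ t ∈ (Finset.range (n+1)).image g, Jmp t) := by
    calc (∑ i ∈ Finset.range n, w i)
        ≤ (∑ i ∈ Finset.range n, w i) + pVar p y (s n) (τ (g n)) := le_self_add
      _ ≤ ENNReal.ofReal η ^ p * ∑ t ∈ (Finset.range (n+1)).image g, 2 * Jmp t := hD1 n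
      _ = ENNReal.ofReal η ^ p * (2 * ∑ t ∈ (Finset.range (n+1)).image g, Jmp t) := by
          rw [← Finset.mul_sum]
  have hD2 : (∑ t ∈ (Finset.range (n+1)).image g, Jmp t) ≤ V := by
    refine hJF _ ?_
    intro t ht
    obtain ⟨j, _, rfl⟩ := Finset.mem_image.mp ht
    exact hgmem j
  have hD3 : (∑ i ∈ Finset.range n, edist (y (τ (g i))) (y (τ (g (i+1)))) ^ p) ≤ V := by
    have hkey := PV.nat_le p (y ∘ τ) (a := 0) (b := T) (n+2)
      (fun m => if m = 0 then 0 else if m ≤ n + 1 then g (m-1) else T) ?_ (by simp) ?_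
    · set tt : ℕ → ℝ := fun m => if m = 0 then 0 else if m ≤ n + 1 then g (m-1) else T
        with httdef
      have hterm : ∀ i, i < n → edist (y (τ (g i))) (y (τ (g (i+1)))) ^ p
          = edist ((y ∘ τ) (tt (i+1))) ((y ∘ τ) (tt (i+1+1))) ^ p := by
        intro i hi
        have h1 : tt (i+1) = g i := by
          simp only [httdef]
          rw [if_neg (by omega), if_pos (by omega)]
          congr 1
        have h2 : tt (i+2) = g (i+1) := by
          simp only [httdef]
          rw [if_neg (by omega), if_pos (by omega)]
          congr 1
        rw [h1, h2]
        rfl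
      calc (∑ i ∈ Finset.range n, edist (y (τ (g i))) (y (τ (g (i+1)))) ^ p)
          = ∑ i ∈ Finset.range n, edist ((y ∘ τ) (tt (i+1))) ((y ∘ τ) (tt (i+1+1))) ^ p :=
            Finset.sum_congr rfl fun i hi => hterm i (Finset.mem_range.mp hi)
        _ ≤ ∑ i ∈ Finset.range (n+1), edist ((y ∘ τ) (tt i)) ((y ∘ τ) (tt (i+1))) ^ p := by
            rw [Finset.sum_range_succ' (fun i => edist ((y ∘ τ) (tt i)) ((y ∘ τ) (tt (i+1))) ^ p) n]
            exact le_self_add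
        _ ≤ ∑ i ∈ Finset.range (n+2), edist ((y ∘ τ) (tt i)) ((y ∘ τ) (tt (i+1))) ^ p := by
            rw [Finset.sum_range_succ (fun i => edist ((y ∘ τ) (tt i)) ((y ∘ τ) (tt (i+1))) ^ p)
              (n+1)]
            exact le_self_add
        _ ≤ V := hkey
    · intro i j hij hj
      by_cases hi0 : i = 0
      · subst hi0
        rw [if_pos rfl]
        by_cases hj0 : j = 0
        · rw [if_pos hj0]
        · rw [if_neg hj0]
          by_cases hjn : j ≤ n + 1
          · rw [if_pos hjn]; exact (hgmem (j-1)).1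
          · rw [if_neg hjn]; exact hT.le
      · have hj0 : j ≠ 0 := by omega
        rw [if_neg hi0, if_neg hj0]
        by_cases hin : i ≤ n + 1 <;> by_cases hjn : j ≤ n + 1
        · rw [if_pos hin, if_pos hjn]
          exact hgmono (i-1) (j-1) (by omega)
        · rw [if_pos hin, if_neg hjn]
          exact (hgmem (i-1)).2
        · omega
        · rw [if_neg hin, if_neg hjn]
    · rw [if_neg (by omega), if_neg (by omega)]
  have h3ge1 : (1:ℝ≥0∞) ≤ (3:ℝ≥0∞) ^ (p-1) := by
    calc (1:ℝ≥0∞) = 1 ^ (p-1) := (ENNReal.one_rpow _).symm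
      _ ≤ 3 ^ (p-1) := ENNReal.rpow_le_rpow (by norm_num) (by linarith)
  have hD4 : ∀ i, edist (y (s i)) (y (s (i+1))) ^ p
      ≤ (3:ℝ≥0∞) ^ (p-1) * (edist (y (τ (g i))) (y (τ (g (i+1)))) ^ p + w i) := by
    intro i
    by_cases hgk : g i = g (i+1)
    · have hwk : w i = edist (y (s i)) (y (s (i+1))) ^ p := by
        simp only [hwdef]; rw [if_pos hgk]
      calc edist (y (s i)) (y (s (i+1))) ^ p
          ≤ edist (y (τ (g i))) (y (τ (g (i+1)))) ^ p + w i := by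
            rw [hwk]; exact le_add_self
        _ = 1 * (edist (y (τ (g i))) (y (τ (g (i+1)))) ^ p + w i) := (one_mul _).symm
        _ ≤ (3:ℝ≥0∞) ^ (p-1) * (edist (y (τ (g i))) (y (τ (g (i+1)))) ^ p + w i) :=
            mul_le_mul_left h3ge1 _
    · have hwk : w i = edist (y (s i)) (y (τ (g i))) ^ p
          + edist (y (τ (g (i+1)))) (y (s (i+1))) ^ p := by
        simp only [hwdef]; rw [if_neg hgk]
      have htri : edist (y (s i)) (y (s (i+1)))
          ≤ edist (y (s i)) (y (τ (g i))) + edist (y (τ (g i))) (y (τ (g (i+1))))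
            + edist (y (τ (g (i+1)))) (y (s (i+1))) := edist_triangle4 _ _ _ _
      calc edist (y (s i)) (y (s (i+1))) ^ p
          ≤ (edist (y (s i)) (y (τ (g i))) + edist (y (τ (g i))) (y (τ (g (i+1))))
            + edist (y (τ (g (i+1)))) (y (s (i+1)))) ^ p :=
            ENNReal.rpow_le_rpow htri hp0.le
        _ ≤ (3:ℝ≥0∞) ^ (p-1) * (edist (y (s i)) (y (τ (g i))) ^ p
            + edist (y (τ (g i))) (y (τ (g (i+1)))) ^ p
            + edist (y (τ (g (i+1)))) (y (s (i+1))) ^ p) := PV.three_ineq hp _ _ _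
        _ = (3:ℝ≥0∞) ^ (p-1) * (edist (y (τ (g i))) (y (τ (g (i+1)))) ^ p + w i) := by
            rw [hwk]; ring
  have hsum_eq : (∑ i : Fin n, edist (y (sF i.castSucc)) (y (sF i.succ)) ^ p)
      = ∑ i ∈ Finset.range n, edist (y (s i)) (y (s (i+1))) ^ p := by
    rw [← Fin.sum_univ_eq_sum_range (fun i => edist (y (s i)) (y (s (i+1))) ^ p) n]
    apply Finset.sum_congr rfl
    intro i _
    have h1 : s i.val = sF i.castSucc := by
      simp only [hsdef]
      congr 1
      apply Fin.ext
      simp [Nat.min_eq_left (Nat.le_of_lt i.isLt)]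
    have h2 : s (i.val + 1) = sF i.succ := by
      simp only [hsdef]
      congr 1
      apply Fin.ext
      simp [Nat.min_eq_left i.isLt]
    rw [h1, h2]
  rw [hsum_eq]
  have hconst : (3:ℝ≥0∞) ^ (p-1) * (1 + 2 * ENNReal.ofReal η ^ p)
      ≤ ENNReal.ofReal ((1 + (2 : ℝ) ^ p + (3 : ℝ) ^ (p - 1))
        + η ^ p * ((1 + (2 : ℝ) ^ p + (3 : ℝ) ^ (p - 1)) + (3 : ℝ) ^ (p - 1))) := by
    have e3 : (3:ℝ≥0∞) = ENNReal.ofReal 3 := by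
      rw [ENNReal.ofReal_ofNat]
    rw [e3, ENNReal.ofReal_rpow_of_pos (by norm_num),
      ENNReal.ofReal_rpow_of_pos (by linarith : (0:ℝ) < η)]
    have h1 : (1:ℝ≥0∞) + 2 * ENNReal.ofReal (η ^ p) = ENNReal.ofReal (1 + 2 * η ^ p) := by
      rw [ENNReal.ofReal_add (by norm_num) (by positivity), ENNReal.ofReal_one,
        ENNReal.ofReal_mul (by norm_num), ENNReal.ofReal_ofNat]
    rw [h1, ← ENNReal.ofReal_mul (by positivity)]
    apply ENNReal.ofReal_le_ofReal
    have h2p : (0:ℝ) ≤ (2:ℝ) ^ p := Real.rpow_nonneg (by norm_num) p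
    have h3p : (0:ℝ) ≤ (3:ℝ) ^ (p-1) := Real.rpow_nonneg (by norm_num) _
    have hηp : (0:ℝ) ≤ η ^ p := Real.rpow_nonneg (by linarith) p
    nlinarith [mul_nonneg hηp h2p, mul_nonneg hηp h3p]
  calc (∑ i ∈ Finset.range n, edist (y (s i)) (y (s (i+1))) ^ p)
      ≤ ∑ i ∈ Finset.range n,
        (3:ℝ≥0∞) ^ (p-1) * (edist (y (τ (g i))) (y (τ (g (i+1)))) ^ p + w i) :=
        Finset.sum_le_sum fun i _ => hD4 i
    _ = (3:ℝ≥0∞) ^ (p-1) * ((∑ i ∈ Finset.range n, edist (y (τ (g i))) (y (τ (g (i+1)))) ^ p)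
        + ∑ i ∈ Finset.range n, w i) := by
        rw [← Finset.mul_sum, Finset.sum_add_distrib]
    _ ≤ (3:ℝ≥0∞) ^ (p-1) * (V + ENNReal.ofReal η ^ p * (2 * V)) := by
        refine mul_le_mul_right (add_le_add hD3 (le_trans hD1' ?_)) _
        exact mul_le_mul_right (mul_le_mul_right hD2 2) _
    _ = ((3:ℝ≥0∞) ^ (p-1) * (1 + 2 * ENNReal.ofReal η ^ p)) * V := by ring
    _ ≤ ENNReal.ofReal ((1 + (2 : ℝ) ^ p + (3 : ℝ) ^ (p - 1))
        + η ^ p * ((1 + (2 : ℝ) ^ p + (3 : ℝ) ^ (p - 1)) + (3 : ℝ) ^ (p - 1))) * V :=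
        mul_le_mul_left hconst V
end

section
/- Let (E,d) be a metric space, T > 0, p > 0, and let x : [0,T] → E be càdlàg. For δ > 0 define recursively τ_0(δ) = 0 and, for j ≥ 1, τ_j(δ) = inf{ t ∈ [τ_{j−1}(δ), T] : sup_{u,v ∈ [τ_{j−1}(δ), t]} d(x_u, x_v) > δ }, with the convention inf ∅ = +∞, and let ν(δ) ∈ [0,∞] denote the number of indices j ≥ 1 with τ_j(δ) < ∞. Then ‖x‖_{p-var;[0,T]}^p ≤ Σ_{k=−∞}^{∞} 2^{p(k+1)} ν(2^k), where the sum is over all integers k and both sides are allowed to equal +∞. -/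
open scoped ENNReal Classical

/-- `x : [0,T] → E` is càdlàg: right-continuous on `[0,T)` with left limits on `(0,T]`. -/
def Cadlag {E : Type*} [MetricSpace E] (x : ℝ → E) (T : ℝ) : Prop :=
  (∀ t ∈ Set.Ico (0 : ℝ) T, Filter.Tendsto x (nhdsWithin t (Set.Ioi t)) (nhds (x t))) ∧
  (∀ t ∈ Set.Ioc (0 : ℝ) T, ∃ l : E, Filter.Tendsto x (nhdsWithin t (Set.Iio t)) (nhds l))

/-- The greedy sequence of oscillation times of `x` on `[0,T]` at scale `δ`:
`τ₀ = 0` and `τ_{j+1} = inf { t ∈ [τ_j, T] : sup_{u,v ∈ [τ_j, t]} d(x_u, x_v) > δ }`,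
with values in `[0,∞]` and the convention `inf ∅ = ∞`. -/
noncomputable def greedyTau {E : Type*} [MetricSpace E] (x : ℝ → E) (T δ : ℝ) : ℕ → ℝ≥0∞
  | 0 => 0
  | j + 1 =>
    sInf {s : ℝ≥0∞ | ∃ t : ℝ, 0 ≤ t ∧ t ≤ T ∧ greedyTau x T δ j ≤ ENNReal.ofReal t ∧
      s = ENNReal.ofReal t ∧
      ∃ u v : ℝ, 0 ≤ u ∧ 0 ≤ v ∧ greedyTau x T δ j ≤ ENNReal.ofReal u ∧ u ≤ t ∧
        greedyTau x T δ j ≤ ENNReal.ofReal v ∧ v ≤ t ∧ δ < dist (x u) (x v)}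

/-- `ν(δ)`: the number (in `[0,∞]`) of indices `j ≥ 1` with `τ_j(δ) < ∞`. -/
noncomputable def greedyNu {E : Type*} [MetricSpace E] (x : ℝ → E) (T δ : ℝ) : ℝ≥0∞ :=
  ∑' j : ℕ, if greedyTau x T δ (j + 1) < ⊤ then (1 : ℝ≥0∞) else 0

section Aux

variable {E : Type*} [MetricSpace E]

private lemma greedyTau_succ_eq (x : ℝ → E) (T δ : ℝ) (j : ℕ) :
    greedyTau x T δ (j + 1) =
    sInf {s : ℝ≥0∞ | ∃ t : ℝ, 0 ≤ t ∧ t ≤ T ∧ greedyTau x T δ j ≤ ENNReal.ofReal t ∧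
      s = ENNReal.ofReal t ∧
      ∃ u v : ℝ, 0 ≤ u ∧ 0 ≤ v ∧ greedyTau x T δ j ≤ ENNReal.ofReal u ∧ u ≤ t ∧
        greedyTau x T δ j ≤ ENNReal.ofReal v ∧ v ≤ t ∧ δ < dist (x u) (x v)} := rfl

/-- Counting lemma: any partition of `[0,T]` has at most `ν(δ)` increments of size `> δ`. -/
private lemma card_big_incr_le_nu (x : ℝ → E) (T δ : ℝ) (n : ℕ) (t : Fin (n + 1) → ℝ)
    (ht : Monotone t) (h0 : t 0 = 0) (hl : t (Fin.last n) = T) :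
    ((Finset.univ.filter
        (fun i : Fin n => δ < dist (x (t i.castSucc)) (x (t i.succ)))).card : ℝ≥0∞)
      ≤ greedyNu x T δ := by
  classical
  set s : Finset (Fin n) :=
    Finset.univ.filter (fun i : Fin n => δ < dist (x (t i.castSucc)) (x (t i.succ))) with hs
  set m := s.card with hm
  set e : Fin m ≃o {a // a ∈ s} := s.orderIsoOfFin hm.symm with he
  have htnn : ∀ i : Fin (n + 1), 0 ≤ t i := fun i => h0 ▸ ht (Fin.zero_le i)
  have htT : ∀ i : Fin (n + 1), t i ≤ T := fun i => hl ▸ ht (Fin.le_last i)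
  have hbig : ∀ j : Fin m, δ < dist (x (t ((e j : Fin n)).castSucc)) (x (t ((e j : Fin n)).succ)) := by
    intro j
    exact (Finset.mem_filter.mp (e j).2).2
  have key : ∀ j : ℕ, ∀ hj : j < m,
      greedyTau x T δ (j + 1) ≤ ENNReal.ofReal (t ((e ⟨j, hj⟩ : Fin n)).succ) := by
    intro j
    induction j with
    | zero =>
      intro hj
      rw [greedyTau_succ_eq]
      refine sInf_le ?_
      refine ⟨t ((e ⟨0, hj⟩ : Fin n)).succ, htnn _, htT _, ?_, rfl,
        t ((e ⟨0, hj⟩ : Fin n)).castSucc, t ((e ⟨0, hj⟩ : Fin n)).succ,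
        htnn _, htnn _, ?_, ht (Fin.castSucc_le_succ _), ?_, le_refl _, hbig _⟩
      · show greedyTau x T δ 0 ≤ _; simp [greedyTau]
      · show greedyTau x T δ 0 ≤ _; simp [greedyTau]
      · show greedyTau x T δ 0 ≤ _; simp [greedyTau]
    | succ j ih =>
      intro hj
      have hj' : j < m := Nat.lt_of_succ_lt hj
      have hlt : (e ⟨j, hj'⟩ : Fin n) < (e ⟨j + 1, hj⟩ : Fin n) := by
        have : (⟨j, hj'⟩ : Fin m) < ⟨j + 1, hj⟩ := by simp [Fin.lt_def]
        exact e.strictMono this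
      have hle : ((e ⟨j, hj'⟩ : Fin n)).succ ≤ ((e ⟨j + 1, hj⟩ : Fin n)).castSucc := by
        simp only [Fin.le_def, Fin.lt_def, Fin.val_succ, Fin.coe_castSucc] at hlt ⊢
        omega
      have hprev : greedyTau x T δ (j + 1)
          ≤ ENNReal.ofReal (t ((e ⟨j + 1, hj⟩ : Fin n)).castSucc) :=
        (ih hj').trans (ENNReal.ofReal_le_ofReal (ht hle))
      rw [greedyTau_succ_eq]
      refine sInf_le ?_
      refine ⟨t ((e ⟨j + 1, hj⟩ : Fin n)).succ, htnn _, htT _,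
        hprev.trans (ENNReal.ofReal_le_ofReal (ht (Fin.castSucc_le_succ _))), rfl,
        t ((e ⟨j + 1, hj⟩ : Fin n)).castSucc, t ((e ⟨j + 1, hj⟩ : Fin n)).succ,
        htnn _, htnn _, hprev, ht (Fin.castSucc_le_succ _),
        hprev.trans (ENNReal.ofReal_le_ofReal (ht (Fin.castSucc_le_succ _))), le_refl _,
        hbig _⟩
  calc (m : ℝ≥0∞)
      = ∑ j ∈ Finset.range m, (if greedyTau x T δ (j + 1) < ⊤ then (1 : ℝ≥0∞) else 0) := by
        rw [Finset.sum_congr rfl (fun j hj => if_pos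
          (lt_of_le_of_lt (key j (Finset.mem_range.mp hj)) ENNReal.ofReal_lt_top))]
        simp
    _ ≤ greedyNu x T δ := ENNReal.sum_le_tsum _

private lemma dyadic_bracket {d : ℝ} (hd : 0 < d) :
    (2 : ℝ) ^ (⌈Real.logb 2 d⌉ - 1) < d ∧ d ≤ (2 : ℝ) ^ (⌈Real.logb 2 d⌉ - 1 + 1) := by
  set y := Real.logb 2 d with hy
  have hdy : (2 : ℝ) ^ y = d := Real.rpow_logb two_pos (by norm_num) hd
  constructor
  · have h1 : ((⌈y⌉ - 1 : ℤ) : ℝ) < y := by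
      have := Int.ceil_lt_add_one y
      push_cast
      linarith
    calc (2 : ℝ) ^ (⌈y⌉ - 1) = (2 : ℝ) ^ (((⌈y⌉ - 1 : ℤ)) : ℝ) := (Real.rpow_intCast 2 _).symm
      _ < 2 ^ y := Real.rpow_lt_rpow_of_exponent_lt one_lt_two h1
      _ = d := hdy
  · have h1 : y ≤ ((⌈y⌉ - 1 + 1 : ℤ) : ℝ) := by
      have := Int.le_ceil y
      push_cast
      linarith
    calc d = 2 ^ y := hdy.symm
      _ ≤ (2 : ℝ) ^ (((⌈y⌉ - 1 + 1 : ℤ)) : ℝ) := Real.rpow_le_rpow_of_exponent_le one_le_two h1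
      _ = (2 : ℝ) ^ (⌈y⌉ - 1 + 1) := Real.rpow_intCast 2 _

end Aux

/-- Estimate (4.2) in the proof of Lemma 4.3 of the paper:
for a càdlàg path `x` on `[0,T]`,
`‖x‖_{p-var;[0,T]}^p ≤ ∑_{k ∈ ℤ} 2^{p(k+1)} ν(2^k)`, both sides possibly `+∞`. -/
theorem pvar_le_dyadic_greedy_count
    {E : Type*} [MetricSpace E] (p T : ℝ) (hp : 0 < p) (hT : 0 < T)
    (x : ℝ → E) (hx : Cadlag x T) :
    pVar p x 0 T
      ≤ ∑' k : ℤ, ENNReal.ofReal ((2 : ℝ) ^ (p * ((k : ℝ) + 1))) *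
          greedyNu x T ((2 : ℝ) ^ k) := by
  unfold pVar
  refine iSup_le fun n => iSup_le fun t => iSup_le fun ht => iSup_le fun h0 => iSup_le fun hl => ?_
  classical
  have hstep1 : (∑ i : Fin n, edist (x (t i.castSucc)) (x (t i.succ)) ^ p)
      = ∑ i ∈ Finset.univ.filter
          (fun i : Fin n => 0 < dist (x (t i.castSucc)) (x (t i.succ))),
          edist (x (t i.castSucc)) (x (t i.succ)) ^ p := by
    refine (Finset.sum_subset (Finset.subset_univ _) ?_).symm
    intro i _ hi
    simp only [Finset.mem_filter, Finset.mem_univ, true_and, not_lt] at hi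
    have h0d : dist (x (t i.castSucc)) (x (t i.succ)) = 0 := le_antisymm hi dist_nonneg
    rw [edist_dist, h0d]
    simp [ENNReal.zero_rpow_of_pos hp]
  set s' := Finset.univ.filter
    (fun i : Fin n => 0 < dist (x (t i.castSucc)) (x (t i.succ))) with hs'
  set ki : Fin n → ℤ :=
    fun i => ⌈Real.logb 2 (dist (x (t i.castSucc)) (x (t i.succ)))⌉ - 1 with hki
  rw [hstep1, ← Finset.sum_fiberwise_of_maps_to (t := s'.image ki)
    (fun i hi => Finset.mem_image_of_mem ki hi)
    (fun i => edist (x (t i.castSucc)) (x (t i.succ)) ^ p)]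
  refine le_trans (Finset.sum_le_sum fun k _ => ?_) (ENNReal.sum_le_tsum _)
  have hbound : ∀ i ∈ s'.filter (fun i => ki i = k),
      edist (x (t i.castSucc)) (x (t i.succ)) ^ p
        ≤ ENNReal.ofReal ((2 : ℝ) ^ (p * ((k : ℝ) + 1))) := by
    intro i hi
    obtain ⟨hi1, hik⟩ := Finset.mem_filter.mp hi
    have hdi : 0 < dist (x (t i.castSucc)) (x (t i.succ)) := (Finset.mem_filter.mp hi1).2
    have hbr := (dyadic_bracket hdi).2
    rw [edist_dist, ENNReal.ofReal_rpow_of_pos hdi]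
    refine ENNReal.ofReal_le_ofReal ?_
    have h2 : dist (x (t i.castSucc)) (x (t i.succ)) ≤ (2 : ℝ) ^ (k + 1) := by
      rw [← hik]
      exact hbr
    calc dist (x (t i.castSucc)) (x (t i.succ)) ^ p
        ≤ ((2 : ℝ) ^ (k + 1 : ℤ)) ^ p := Real.rpow_le_rpow hdi.le h2 hp.le
      _ = (2 : ℝ) ^ (p * ((k : ℝ) + 1)) := by
          rw [← Real.rpow_intCast 2 (k + 1), ← Real.rpow_mul (by norm_num : (0:ℝ) ≤ 2)]
          congr 1
          push_cast
          ring
  calc ∑ i ∈ s'.filter (fun i => ki i = k), edist (x (t i.castSucc)) (x (t i.succ)) ^ p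
      ≤ (s'.filter (fun i => ki i = k)).card • ENNReal.ofReal ((2 : ℝ) ^ (p * ((k : ℝ) + 1))) :=
        Finset.sum_le_card_nsmul _ _ _ hbound
    _ = ((s'.filter (fun i => ki i = k)).card : ℝ≥0∞)
          * ENNReal.ofReal ((2 : ℝ) ^ (p * ((k : ℝ) + 1))) := nsmul_eq_mul _ _
    _ ≤ greedyNu x T ((2 : ℝ) ^ k) * ENNReal.ofReal ((2 : ℝ) ^ (p * ((k : ℝ) + 1))) := by
        refine mul_le_mul_left ?_ _
        have hsub : s'.filter (fun i => ki i = k) ⊆ Finset.univ.filter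
            (fun i : Fin n => (2 : ℝ) ^ k < dist (x (t i.castSucc)) (x (t i.succ))) := by
          intro i hi
          obtain ⟨hi1, hik⟩ := Finset.mem_filter.mp hi
          have hdi : 0 < dist (x (t i.castSucc)) (x (t i.succ)) := (Finset.mem_filter.mp hi1).2
          have hbr := (dyadic_bracket hdi).1
          refine Finset.mem_filter.mpr ⟨Finset.mem_univ _, ?_⟩
          rw [← hik]
          exact hbr
        calc ((s'.filter (fun i => ki i = k)).card : ℝ≥0∞)
            ≤ ((Finset.univ.filter (fun i : Fin n =>
                (2 : ℝ) ^ k < dist (x (t i.castSucc)) (x (t i.succ)))).card : ℝ≥0∞) :=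
              Nat.cast_le.mpr (Finset.card_le_card hsub)
          _ ≤ greedyNu x T ((2 : ℝ) ^ k) := card_big_incr_le_nu x T _ n t ht h0 hl
    _ = ENNReal.ofReal ((2 : ℝ) ^ (p * ((k : ℝ) + 1))) * greedyNu x T ((2 : ℝ) ^ k) :=
        mul_comm _ _
end

section
/- Let 1 ≤ p < p', T > 0, and let x : [0,T] → ℝ^d be continuous with finite p-variation ‖x‖_{p-var;[0,T]} < ∞. Let (λ^n)_{n≥1} be a sequence of strictly increasing bijections of [0,T] onto itself with sup_{t∈[0,T]} |λ^n(t) − t| → 0 as n → ∞. Then ‖x ∘ λ^n − x‖_{p'-var;[0,T]} → 0 as n → ∞. -/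
open scoped ENNReal

/-- Any partition sum is at most `pVar`. -/
lemma sum_le_pVar {E : Type*} [PseudoMetricSpace E] (p : ℝ) (x : ℝ → E) (a b : ℝ) {n : ℕ}
    {t : Fin (n + 1) → ℝ} (h1 : Monotone t) (h2 : t 0 = a) (h3 : t (Fin.last n) = b) :
    (∑ i : Fin n, edist (x (t i.castSucc)) (x (t i.succ)) ^ p) ≤ pVar p x a b :=
  le_iSup_of_le n (le_iSup_of_le t
    (le_iSup_of_le h1 (le_iSup_of_le h2 (le_iSup_of_le h3 le_rfl))))

/-- Interpolation: if all increments are bounded by `K`, then the `p'`-variation is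
controlled by the `p`-variation. -/
lemma pVar_interp {E : Type*} [PseudoMetricSpace E] {p p' : ℝ} (hp : 0 ≤ p) (hpp' : p ≤ p')
    (x : ℝ → E) (a b : ℝ) (K : ℝ≥0∞)
    (hK : ∀ s ∈ Set.Icc a b, ∀ u ∈ Set.Icc a b, edist (x s) (x u) ≤ K) :
    pVar p' x a b ≤ K ^ (p' - p) * pVar p x a b := by
  refine iSup_le fun n => iSup_le fun t => iSup_le fun h1 => iSup_le fun h2 =>
    iSup_le fun h3 => ?_
  have hmem : ∀ i : Fin (n + 1), t i ∈ Set.Icc a b := fun i =>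
    ⟨by rw [← h2]; exact h1 (Fin.zero_le i), by rw [← h3]; exact h1 (Fin.le_last i)⟩
  calc ∑ i : Fin n, edist (x (t i.castSucc)) (x (t i.succ)) ^ p'
      ≤ ∑ i : Fin n, K ^ (p' - p) * edist (x (t i.castSucc)) (x (t i.succ)) ^ p := by
        refine Finset.sum_le_sum fun i _ => ?_
        have heq : edist (x (t i.castSucc)) (x (t i.succ)) ^ p'
            = edist (x (t i.castSucc)) (x (t i.succ)) ^ (p' - p)
              * edist (x (t i.castSucc)) (x (t i.succ)) ^ p := by
          rw [← ENNReal.rpow_add_of_nonneg _ _ (by linarith) hp, sub_add_cancel]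
        rw [heq]
        exact mul_le_mul_left
          (ENNReal.rpow_le_rpow (hK _ (hmem _) _ (hmem _)) (by linarith)) _
    _ = K ^ (p' - p) * ∑ i : Fin n, edist (x (t i.castSucc)) (x (t i.succ)) ^ p := by
        rw [Finset.mul_sum]
    _ ≤ _ := mul_le_mul_right (sum_le_pVar p x a b h1 h2 h3) _

/-- `p`-variation of a difference of paths. -/
lemma pVar_sub_le {E : Type*} [SeminormedAddCommGroup E] {p : ℝ} (hp : 0 ≤ p)
    (f g : ℝ → E) (a b : ℝ) :
    pVar p (fun t => f t - g t) a b ≤ 2 ^ p * (pVar p f a b + pVar p g a b) := by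
  refine iSup_le fun n => iSup_le fun t => iSup_le fun h1 => iSup_le fun h2 =>
    iSup_le fun h3 => ?_
  have key : ∀ i : Fin n,
      edist (f (t i.castSucc) - g (t i.castSucc)) (f (t i.succ) - g (t i.succ)) ^ p
        ≤ 2 ^ p * (edist (f (t i.castSucc)) (f (t i.succ)) ^ p
            + edist (g (t i.castSucc)) (g (t i.succ)) ^ p) := by
    intro i
    set A := edist (f (t i.castSucc)) (f (t i.succ)) with hA
    set B := edist (g (t i.castSucc)) (g (t i.succ)) with hB
    have h0 : edist (f (t i.castSucc) - g (t i.castSucc)) (f (t i.succ) - g (t i.succ))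
        ≤ A + B := by
      rw [hA, hB, edist_dist, edist_dist, edist_dist,
        ← ENNReal.ofReal_add dist_nonneg dist_nonneg]
      exact ENNReal.ofReal_le_ofReal (dist_sub_sub_le _ _ _ _)
    have h4 : A + B ≤ 2 * max A B := by
      rw [two_mul]; exact add_le_add (le_max_left _ _) (le_max_right _ _)
    calc edist (f (t i.castSucc) - g (t i.castSucc)) (f (t i.succ) - g (t i.succ)) ^ p
        ≤ (2 * max A B) ^ p := ENNReal.rpow_le_rpow (h0.trans h4) hp
      _ = 2 ^ p * max A B ^ p := ENNReal.mul_rpow_of_nonneg _ _ hp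
      _ ≤ 2 ^ p * (A ^ p + B ^ p) := by
          refine mul_le_mul_right ?_ _
          rcases le_total A B with h | h
          · rw [max_eq_right h]; exact le_add_self
          · rw [max_eq_left h]; exact le_add_right le_rfl
  calc ∑ i : Fin n,
        edist ((fun t => f t - g t) (t i.castSucc)) ((fun t => f t - g t) (t i.succ)) ^ p
      ≤ ∑ i : Fin n, 2 ^ p * (edist (f (t i.castSucc)) (f (t i.succ)) ^ p
          + edist (g (t i.castSucc)) (g (t i.succ)) ^ p) :=
        Finset.sum_le_sum fun i _ => key i
    _ = 2 ^ p * ((∑ i : Fin n, edist (f (t i.castSucc)) (f (t i.succ)) ^ p)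
          + ∑ i : Fin n, edist (g (t i.castSucc)) (g (t i.succ)) ^ p) := by
        rw [← Finset.mul_sum, Finset.sum_add_distrib]
    _ ≤ _ := mul_le_mul_right
        (add_le_add (sum_le_pVar p f a b h1 h2 h3) (sum_le_pVar p g a b h1 h2 h3)) _

/-- A strictly monotone bijection of `[0,T]` fixes the endpoints. -/
lemma reparam_endpoints {T : ℝ} (hT : 0 ≤ T) {l : ℝ → ℝ}
    (hmono : StrictMonoOn l (Set.Icc 0 T))
    (hbij : Set.BijOn l (Set.Icc 0 T) (Set.Icc 0 T)) : l 0 = 0 ∧ l T = T := by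
  have h0mem : (0 : ℝ) ∈ Set.Icc 0 T := ⟨le_rfl, hT⟩
  have hTmem : T ∈ Set.Icc 0 T := ⟨hT, le_rfl⟩
  constructor
  · obtain ⟨s, hs, hls⟩ := hbij.surjOn h0mem
    have h1 : l 0 ≤ l s := hmono.monotoneOn h0mem hs hs.1
    exact le_antisymm (by rw [hls] at h1; exact h1) (hbij.mapsTo h0mem).1
  · obtain ⟨s, hs, hls⟩ := hbij.surjOn hTmem
    have h1 : l s ≤ l T := hmono.monotoneOn hs hTmem hs.2
    exact le_antisymm (hbij.mapsTo hTmem).2 (by rw [hls] at h1; exact h1)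

/-- Reparametrization does not increase `p`-variation. -/
lemma pVar_comp_le {E : Type*} [PseudoMetricSpace E] (p : ℝ) (x : ℝ → E) {T : ℝ} (hT : 0 ≤ T)
    (l : ℝ → ℝ) (hmono : StrictMonoOn l (Set.Icc 0 T))
    (hbij : Set.BijOn l (Set.Icc 0 T) (Set.Icc 0 T)) :
    pVar p (fun t => x (l t)) 0 T ≤ pVar p x 0 T := by
  obtain ⟨hl0, hlT⟩ := reparam_endpoints hT hmono hbij
  refine iSup_le fun n => iSup_le fun t => iSup_le fun h1 => iSup_le fun h2 =>
    iSup_le fun h3 => ?_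
  have hmem : ∀ i : Fin (n + 1), t i ∈ Set.Icc 0 T := fun i =>
    ⟨by rw [← h2]; exact h1 (Fin.zero_le i), by rw [← h3]; exact h1 (Fin.le_last i)⟩
  have h1' : Monotone fun i => l (t i) := fun i j hij =>
    hmono.monotoneOn (hmem i) (hmem j) (h1 hij)
  exact sum_le_pVar p x 0 T h1' (by simp [h2, hl0]) (by simp [h3, hlT])

/-- Remark 3.2 of the paper: if `1 ≤ p < p'`, `x : [0,T] → ℝ^d` is continuous of finite
`p`-variation and `(λⁿ)` are strictly increasing bijections of `[0,T]` with
`sup_t |λⁿ(t) − t| → 0`, then `‖x ∘ λⁿ − x‖_{p'-var;[0,T]} → 0`. -/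
theorem pprime_var_convergence_of_reparam
    (d : ℕ) (p p' T : ℝ) (hp : 1 ≤ p) (hpp' : p < p') (hT : 0 < T)
    (x : ℝ → EuclideanSpace ℝ (Fin d))
    (hcont : ContinuousOn x (Set.Icc 0 T))
    (hfin : pVar p x 0 T ≠ ⊤)
    (l : ℕ → ℝ → ℝ)
    (hmono : ∀ n, StrictMonoOn (l n) (Set.Icc 0 T))
    (hbij : ∀ n, Set.BijOn (l n) (Set.Icc 0 T) (Set.Icc 0 T))
    (hsup : ∀ ε > (0 : ℝ), ∃ N : ℕ, ∀ n ≥ N, ∀ t ∈ Set.Icc (0 : ℝ) T, |l n t - t| < ε) :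
    Filter.Tendsto (fun n => pVarNorm p' (fun t => x (l n t) - x t) 0 T)
      Filter.atTop (nhds 0) := by
  have hp0 : (0 : ℝ) < p := lt_of_lt_of_le one_pos hp
  have hp'0 : (0 : ℝ) < p' := lt_trans hp0 hpp'
  have hq : (0 : ℝ) < p' - p := by linarith
  set C : ℝ≥0∞ := 2 ^ p * (pVar p x 0 T + pVar p x 0 T) with hCdef
  have hCtop : C ≠ ⊤ :=
    ENNReal.mul_ne_top (ENNReal.rpow_ne_top_of_nonneg hp0.le (by norm_num))
      (ENNReal.add_ne_top.mpr ⟨hfin, hfin⟩)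
  have hboundC : ∀ n, pVar p (fun t => x (l n t) - x t) 0 T ≤ C := fun n =>
    (pVar_sub_le hp0.le (fun t => x (l n t)) x 0 T).trans
      (mul_le_mul_right
        (add_le_add (pVar_comp_le p x hT.le (l n) (hmono n) (hbij n)) le_rfl) _)
  rw [ENNReal.tendsto_nhds_zero]
  intro ε hε
  set ε₀ := ε ^ p' with hε₀def
  have hε₀pos : 0 < ε₀ := by
    rcases eq_or_ne ε ⊤ with h | h
    · rw [hε₀def, h, ENNReal.top_rpow_of_pos hp'0]; exact ENNReal.zero_lt_top
    · exact ENNReal.rpow_pos hε h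
  obtain ⟨e, he, hee⟩ : ∃ e : ℝ, 0 < e ∧ ENNReal.ofReal e ≤ ε₀ := by
    rcases eq_or_ne ε₀ ⊤ with h | h
    · exact ⟨1, one_pos, by simp [h]⟩
    · exact ⟨ε₀.toReal, ENNReal.toReal_pos hε₀pos.ne' h,
        by rw [ENNReal.ofReal_toReal h]⟩
  set c := C.toReal with hcdef
  have hcC : C = ENNReal.ofReal c := (ENNReal.ofReal_toReal hCtop).symm
  have hc0 : 0 ≤ c := ENNReal.toReal_nonneg
  set δ : ℝ := (e / (c + 1)) ^ (p' - p)⁻¹ / 2 with hδdef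
  have hδpos : 0 < δ := by positivity
  have huc := (isCompact_Icc (a := (0:ℝ)) (b := T)).uniformContinuousOn_of_continuous hcont
  rw [Metric.uniformContinuousOn_iff] at huc
  obtain ⟨η, hη, hucη⟩ := huc δ hδpos
  obtain ⟨N, hN⟩ := hsup η hη
  refine Filter.eventually_atTop.mpr ⟨N, fun n hn => ?_⟩
  -- the uniform bound on the difference path
  have hfn : ∀ t ∈ Set.Icc (0 : ℝ) T, ‖x (l n t) - x t‖ ≤ δ := by
    intro t ht
    have hlt : l n t ∈ Set.Icc (0 : ℝ) T := (hbij n).mapsTo ht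
    have hd : dist (l n t) t < η := by
      rw [Real.dist_eq]; exact hN n hn t ht
    have := hucη (l n t) hlt t ht hd
    rw [dist_eq_norm] at this
    exact this.le
  have hK : ∀ s ∈ Set.Icc (0 : ℝ) T, ∀ u ∈ Set.Icc (0 : ℝ) T,
      edist (x (l n s) - x s) (x (l n u) - x u) ≤ ENNReal.ofReal (2 * δ) := by
    intro s hs u hu
    rw [edist_dist]
    refine ENNReal.ofReal_le_ofReal ?_
    calc dist (x (l n s) - x s) (x (l n u) - x u)
        ≤ ‖x (l n s) - x s‖ + ‖x (l n u) - x u‖ := dist_le_norm_add_norm _ _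
      _ ≤ δ + δ := add_le_add (hfn s hs) (hfn u hu)
      _ = 2 * δ := by ring
  have h2 : pVar p' (fun t => x (l n t) - x t) 0 T ≤ ENNReal.ofReal (2 * δ) ^ (p' - p) * C :=
    (pVar_interp hp0.le hpp'.le _ 0 T _ hK).trans (mul_le_mul_right (hboundC n) _)
  have h3 : ENNReal.ofReal (2 * δ) ^ (p' - p) * C
      = ENNReal.ofReal ((2 * δ) ^ (p' - p) * c) := by
    rw [ENNReal.ofReal_rpow_of_nonneg (by positivity) hq.le, hcC,
      ← ENNReal.ofReal_mul (by positivity)]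
  have h4 : (2 * δ) ^ (p' - p) * c ≤ e := by
    have h2δ : 2 * δ = (e / (c + 1)) ^ (p' - p)⁻¹ := by rw [hδdef]; ring
    rw [h2δ, Real.rpow_inv_rpow (by positivity) hq.ne']
    rw [div_mul_eq_mul_div, div_le_iff₀ (by linarith)]
    nlinarith
  have h5 : pVar p' (fun t => x (l n t) - x t) 0 T ≤ ε₀ := by
    refine h2.trans ?_
    rw [h3]
    exact (ENNReal.ofReal_le_ofReal h4).trans hee
  have h6 : pVarNorm p' (fun t => x (l n t) - x t) 0 T ≤ ε₀ ^ (1 / p') :=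
    ENNReal.rpow_le_rpow h5 (by positivity)
  have h7 : ε₀ ^ (1 / p') = ε := by
    rw [hε₀def, ← ENNReal.rpow_mul, mul_one_div, div_self hp'0.ne', ENNReal.rpow_one]
  rwa [h7] at h6
end

section
/- Let p ≥ 1, T > 0, and let x : [0,T] → ℝ^d be continuous with finite p-variation. Say that a path z : [0,T] → ℝ^d has the Wiener property if for every ε > 0 there exists δ > 0 such that for every finite partition 0 = t_0 < t_1 < … < t_k = T with max_i (t_{i+1} − t_i) < δ one has Σ_i ‖z‖_{p-var;[t_i,t_{i+1}]}^p < ε. Let λ : [0,T] → [0,T] be a strictly increasing continuous bijection. Then x has the Wiener property if and only if x ∘ λ has the Wiener property. -/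
open scoped ENNReal

/-- Wiener's property for a path `z` on `[0,T]`: for every `ε > 0` there is `δ > 0` such
that for every finite partition `0 = t₀ < t₁ < … < t_k = T` of mesh `< δ`, the sum of the
`p`-th powers of the `p`-variations of `z` over the partition intervals is `< ε`. -/
def WienerProp {E : Type*} [PseudoMetricSpace E] (p T : ℝ) (z : ℝ → E) : Prop :=
  ∀ ε > (0 : ℝ), ∃ δ > (0 : ℝ), ∀ (k : ℕ) (t : Fin (k + 1) → ℝ),
    StrictMono t → t 0 = 0 → t (Fin.last k) = T →
    (∀ i : Fin k, t i.succ - t i.castSucc < δ) →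
    ∑ i : Fin k, pVar p z (t i.castSucc) (t i.succ) < ENNReal.ofReal ε

/-- Values of a monotone partition lie between the endpoints. -/
lemma mono_mem_Icc {n : ℕ} {t : Fin (n + 1) → ℝ} (ht : Monotone t) {a b : ℝ}
    (h0 : t 0 = a) (hl : t (Fin.last n) = b) (i : Fin (n + 1)) : t i ∈ Set.Icc a b :=
  ⟨h0 ▸ ht (Fin.zero_le i), hl ▸ ht (Fin.le_last i)⟩

/-- One-sided comparison of `pVar` via transport of partitions. -/
lemma pVar_le_pVar {E : Type*} [PseudoMetricSpace E] {p : ℝ} {z w : ℝ → E} {a b a' b' : ℝ}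
    (h : ∀ (n : ℕ) (t : Fin (n + 1) → ℝ), Monotone t → t 0 = a → t (Fin.last n) = b →
      ∃ s : Fin (n + 1) → ℝ, Monotone s ∧ s 0 = a' ∧ s (Fin.last n) = b' ∧
        ∀ i : Fin n, edist (z (t i.castSucc)) (z (t i.succ))
          = edist (w (s i.castSucc)) (w (s i.succ))) :
    pVar p z a b ≤ pVar p w a' b' := by
  refine iSup_le fun n => iSup_le fun t => iSup_le fun ht => iSup_le fun h0 => iSup_le fun hl => ?_
  obtain ⟨s, hs, hs0, hsl, hed⟩ := h n t ht h0 hl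
  calc ∑ i : Fin n, edist (z (t i.castSucc)) (z (t i.succ)) ^ p
      = ∑ i : Fin n, edist (w (s i.castSucc)) (w (s i.succ)) ^ p := by
        refine Finset.sum_congr rfl fun i _ => by rw [hed i]
    _ ≤ pVar p w a' b' := by
        refine le_iSup_of_le n (le_iSup_of_le s ?_)
        exact le_iSup_of_le hs (le_iSup_of_le hs0 (le_iSup_of_le hsl le_rfl))

/-- `pVar` of a reparametrized path. -/
lemma pVar_comp {E : Type*} [PseudoMetricSpace E] {p T : ℝ} (x : ℝ → E) (lam : ℝ → ℝ)
    (hmono : StrictMonoOn lam (Set.Icc 0 T)) (hbij : Set.BijOn lam (Set.Icc 0 T) (Set.Icc 0 T))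
    {a b : ℝ} (ha : a ∈ Set.Icc 0 T) (hb : b ∈ Set.Icc 0 T) :
    pVar p (x ∘ lam) a b = pVar p x (lam a) (lam b) := by
  set g : ℝ → ℝ := Function.invFunOn lam (Set.Icc 0 T) with hg
  have hinv : Set.InvOn g lam (Set.Icc 0 T) (Set.Icc 0 T) := hbij.invOn_invFunOn
  have hgmaps : Set.MapsTo g (Set.Icc 0 T) (Set.Icc 0 T) := hbij.surjOn.mapsTo_invFunOn
  apply le_antisymm
  · refine pVar_le_pVar fun n t ht h0 hl => ?_
    refine ⟨lam ∘ t, ?_, by simp [h0], by simp [hl], fun i => rfl⟩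
    intro i j hij
    exact hmono.monotoneOn (Set.Icc_subset_Icc ha.1 hb.2 (mono_mem_Icc ht h0 hl i))
      (Set.Icc_subset_Icc ha.1 hb.2 (mono_mem_Icc ht h0 hl j)) (ht hij)
  · refine pVar_le_pVar fun n t ht h0 hl => ?_
    have hla : lam a ∈ Set.Icc 0 T := hbij.mapsTo ha
    have hlb : lam b ∈ Set.Icc 0 T := hbij.mapsTo hb
    have hmem : ∀ i, t i ∈ Set.Icc 0 T := fun i =>
      Set.Icc_subset_Icc hla.1 hlb.2 (mono_mem_Icc ht h0 hl i)
    refine ⟨g ∘ t, ?_, ?_, ?_, fun i => ?_⟩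
    · intro i j hij
      have h1 := hmem i; have h2 := hmem j
      by_contra hlt
      push_neg at hlt
      have hlam : lam (g (t j)) < lam (g (t i)) := hmono (hgmaps h2) (hgmaps h1) hlt
      rw [hinv.2 h1, hinv.2 h2] at hlam
      exact absurd (ht hij) (not_le.2 hlam)
    · show g (t 0) = a
      rw [h0]; exact hinv.1 ha
    · show g (t (Fin.last n)) = b
      rw [hl]; exact hinv.1 hb
    · show edist (x (t _)) (x (t _)) = edist ((x ∘ lam) (g (t _))) ((x ∘ lam) (g (t _)))
      simp only [Function.comp_apply, hinv.2 (hmem _)]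

/-- A strictly increasing bijection of `[0,T]` onto itself fixes the endpoints. -/
lemma fix_endpoints {T : ℝ} (hT : 0 ≤ T) {lam : ℝ → ℝ}
    (hmono : StrictMonoOn lam (Set.Icc 0 T)) (hbij : Set.BijOn lam (Set.Icc 0 T) (Set.Icc 0 T)) :
    lam 0 = 0 ∧ lam T = T := by
  have h0T : (0:ℝ) ∈ Set.Icc 0 T := Set.left_mem_Icc.2 hT
  have hTT : T ∈ Set.Icc 0 T := Set.right_mem_Icc.2 hT
  constructor
  · obtain ⟨s, hs, hls⟩ := hbij.surjOn h0T
    rcases eq_or_lt_of_le hs.1 with h | h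
    · rw [← h] at hls; exact hls
    · have h1 : lam 0 < 0 := by
        have := hmono h0T hs h
        rw [hls] at this; exact this
      exact absurd (hbij.mapsTo h0T).1 (not_le.2 h1)
  · obtain ⟨s, hs, hls⟩ := hbij.surjOn hTT
    rcases eq_or_lt_of_le hs.2 with h | h
    · rw [h] at hls; exact hls
    · have h1 : T < lam T := by
        have := hmono hs hTT h
        rw [hls] at this; exact this
      exact absurd (hbij.mapsTo hTT).2 (not_le.2 h1)

/-- Forward transfer of the Wiener property under reparametrization. -/
lemma wienerProp_comp {E : Type*} [PseudoMetricSpace E] {p T : ℝ} (hT : 0 < T)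
    (x : ℝ → E) (lam : ℝ → ℝ)
    (hmono : StrictMonoOn lam (Set.Icc 0 T))
    (hlcont : ContinuousOn lam (Set.Icc 0 T))
    (hbij : Set.BijOn lam (Set.Icc 0 T) (Set.Icc 0 T)) :
    WienerProp p T x → WienerProp p T (x ∘ lam) := by
  intro H ε hε
  obtain ⟨δ, hδ, Hδ⟩ := H ε hε
  have huc : UniformContinuousOn lam (Set.Icc 0 T) :=
    isCompact_Icc.uniformContinuousOn_of_continuous hlcont
  rw [Metric.uniformContinuousOn_iff] at huc
  obtain ⟨δ', hδ', Hδ'⟩ := huc δ hδ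
  obtain ⟨hl0, hlT⟩ := fix_endpoints hT.le hmono hbij
  refine ⟨δ', hδ', fun k t hst h0 hl hmesh => ?_⟩
  have hmem : ∀ i, t i ∈ Set.Icc 0 T := mono_mem_Icc hst.monotone h0 hl
  have hst' : StrictMono (lam ∘ t) := fun i j hij =>
    hmono (hmem i) (hmem j) (hst hij)
  have key : ∀ i : Fin k, pVar p (x ∘ lam) (t i.castSucc) (t i.succ)
      = pVar p x ((lam ∘ t) i.castSucc) ((lam ∘ t) i.succ) := fun i =>
    pVar_comp x lam hmono hbij (hmem _) (hmem _)
  calc ∑ i : Fin k, pVar p (x ∘ lam) (t i.castSucc) (t i.succ)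
      = ∑ i : Fin k, pVar p x ((lam ∘ t) i.castSucc) ((lam ∘ t) i.succ) :=
        Finset.sum_congr rfl fun i _ => key i
    _ < ENNReal.ofReal ε := by
        refine Hδ k (lam ∘ t) hst' (by simp [h0, hl0]) (by simp [hl, hlT]) fun i => ?_
        have h1 := hmem i.castSucc; have h2 := hmem i.succ
        have hle : t i.castSucc ≤ t i.succ := (hst i.castSucc_lt_succ).le
        have := Hδ' _ h2 _ h1 (by
          rw [Real.dist_eq, abs_of_nonneg (by linarith [hmesh i])]
          linarith [hmesh i, hst i.castSucc_lt_succ])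
        rw [Real.dist_eq, abs_of_nonneg (by
          have := hmono.monotoneOn h1 h2 hle
          linarith)] at this
        simpa [Function.comp] using this

/-- `WienerProp` only depends on the path's values on `[0,T]`. -/
lemma wienerProp_congr {E : Type*} [PseudoMetricSpace E] {p T : ℝ} {z w : ℝ → E}
    (h : ∀ s ∈ Set.Icc 0 T, z s = w s) : WienerProp p T z → WienerProp p T w := by
  intro H ε hε
  obtain ⟨δ, hδ, Hδ⟩ := H ε hε
  refine ⟨δ, hδ, fun k t hst h0 hl hmesh => ?_⟩
  have hmem : ∀ i, t i ∈ Set.Icc 0 T := mono_mem_Icc hst.monotone h0 hl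
  have : ∀ i : Fin k, pVar p w (t i.castSucc) (t i.succ)
      = pVar p z (t i.castSucc) (t i.succ) := by
    intro i
    apply le_antisymm <;>
    · refine pVar_le_pVar fun n s hs hs0 hsl => ?_
      refine ⟨s, hs, hs0, hsl, fun j => ?_⟩
      have hm : ∀ m, s m ∈ Set.Icc 0 T := fun m =>
        Set.Icc_subset_Icc (hmem i.castSucc).1 (hmem i.succ).2
          (mono_mem_Icc hs hs0 hsl m)
      rw [h _ (hm _), h _ (hm _)]
  rw [Finset.sum_congr rfl fun i _ => this i]
  exact Hδ k t hst h0 hl hmesh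

/-- Key step in the proof of Proposition 3.3(iv) of the paper: the Wiener property is
invariant under reparametrization by a strictly increasing continuous bijection of
`[0,T]`. -/
theorem wienerProp_reparam_iff
    (d : ℕ) (p T : ℝ) (hp : 1 ≤ p) (hT : 0 < T)
    (x : ℝ → EuclideanSpace ℝ (Fin d))
    (hcont : ContinuousOn x (Set.Icc 0 T))
    (hfin : pVar p x 0 T ≠ ⊤)
    (lam : ℝ → ℝ)
    (hmono : StrictMonoOn lam (Set.Icc 0 T))
    (hlcont : ContinuousOn lam (Set.Icc 0 T))
    (hbij : Set.BijOn lam (Set.Icc 0 T) (Set.Icc 0 T)) :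
    WienerProp p T x ↔ WienerProp p T (x ∘ lam) := by
  constructor
  · exact wienerProp_comp hT x lam hmono hlcont hbij
  · -- use the inverse reparametrization
    intro H
    set g : ℝ → ℝ := Function.invFunOn lam (Set.Icc 0 T) with hgdef
    have hinv : Set.InvOn g lam (Set.Icc 0 T) (Set.Icc 0 T) := hbij.invOn_invFunOn
    have hgmaps : Set.MapsTo g (Set.Icc 0 T) (Set.Icc 0 T) := hbij.surjOn.mapsTo_invFunOn
    have hgbij : Set.BijOn g (Set.Icc 0 T) (Set.Icc 0 T) :=
      hinv.symm.bijOn hgmaps hbij.mapsTo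
    have hgmono : StrictMonoOn g (Set.Icc 0 T) := by
      intro u hu v hv huv
      by_contra hle
      push_neg at hle
      have := hmono.monotoneOn (hgmaps hv) (hgmaps hu) hle
      rw [hinv.2 hu, hinv.2 hv] at this
      exact absurd huv (not_lt.2 this)
    -- continuity of the inverse via compactness
    have hgcont : ContinuousOn g (Set.Icc 0 T) := by
      have hcomp : CompactSpace (Set.Icc (0:ℝ) T) := by infer_instance
      let e : Set.Icc (0:ℝ) T ≃ Set.Icc (0:ℝ) T := Set.BijOn.equiv lam hbij
      have hecont : Continuous e := by
        rw [continuous_induced_rng]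
        exact hlcont.comp_continuous continuous_subtype_val (fun y => y.2)
      let h : Set.Icc (0:ℝ) T ≃ₜ Set.Icc (0:ℝ) T := Continuous.homeoOfEquivCompactToT2 hecont
      have hgeq : ∀ y : Set.Icc (0:ℝ) T, g ↑y = ↑(h.symm y) := by
        intro y
        apply hbij.injOn (hgmaps y.2) (h.symm y).2
        rw [hinv.2 y.2]
        have : e (h.symm y) = y := h.apply_symm_apply y
        have := congrArg Subtype.val this
        simpa [e, Set.BijOn.equiv] using this.symm
      rw [continuousOn_iff_continuous_restrict]
      have : Set.domRestrict (Set.Icc 0 T) g = fun y => ↑(h.symm y) := funext fun y => hgeq y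
      rw [this]
      exact continuous_subtype_val.comp h.symm.continuous
    have H2 := wienerProp_comp hT (x ∘ lam) g hgmono hgcont hgbij H
    refine wienerProp_congr (fun s hs => ?_) H2
    show x (lam (g s)) = x s
    rw [hinv.2 hs]
end
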